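/- arXiv:1702.03538 — 7 statements merged into one kernel-verified Lean document; each statement's English description precedes it below -/
import Mathlib

section
/- Let θ, λ, R be real numbers and let V₁, V₂, P₁, P₂ be complex numbers with V₁·P₂ − V₂·P₁ = 1. Then the 2×2 complex matrix with rows (V₁ − e^{iθ}, V₂) and (P₁ − e^{iθ}·λ·R, P₂ − e^{iθ}) has zero determinant if and only if 2·cos θ = V₁ + P₂ − λ·V₂·R. -/
/-- The coefficient matrix of the quasi-periodicity/jump system has zero
determinant iff `2 cos θ = V₁ + P₂ − λ V₂ R`, given the Wronskian normalisation
`V₁P₂ − V₂P₁ = 1`. -/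
theorem det_zero_iff_trace_condition
    (θ lam R : ℝ) (V₁ V₂ P₁ P₂ : ℂ)
    (hW : V₁ * P₂ - V₂ * P₁ = 1) :
    (Matrix.det !![V₁ - Complex.exp (θ * Complex.I), V₂;
        P₁ - Complex.exp (θ * Complex.I) * (lam : ℂ) * (R : ℂ),
        P₂ - Complex.exp (θ * Complex.I)] = 0)
      ↔ (2 * (Real.cos θ : ℂ) = V₁ + P₂ - (lam : ℂ) * V₂ * (R : ℂ)) := by
  set e := Complex.exp (θ * Complex.I) with he_def
  have he : e ≠ 0 := Complex.exp_ne_zero _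
  have hcos : (2 : ℂ) * (Real.cos θ : ℂ) = e + e⁻¹ := by
    rw [Complex.ofReal_cos, Complex.cos]
    rw [← Complex.exp_neg]
    ring_nf
    exact add_comm _ _
  rw [Matrix.det_fin_two_of, hcos]
  constructor
  · intro h
    have h' : e * e - (V₁ + P₂ - (lam : ℂ) * V₂ * (R : ℂ)) * e + 1 = 0 := by
      rw [← hW]; linear_combination h
    field_simp
    linear_combination h'
  · intro h
    have h' : e + e⁻¹ = V₁ + P₂ - (lam : ℂ) * V₂ * (R : ℂ) := h
    have h'' : e * e + 1 = (V₁ + P₂ - (lam : ℂ) * V₂ * (R : ℂ)) * e := by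
      field_simp at h'
      linear_combination h'
    linear_combination h'' + hW
end

section
/- For every λ ∈ ℝ the following are equivalent: (i) there exist θ ∈ [0,2π) and a nontrivial complex solution (u,p) of the soft-inclusion equation with spectral parameter λ (i.e. u′(y) = p(y)/a₀(y) and p′(y) = −λ·ρ₀(y)·u(y) for all y ∈ [0,h], with (u,p) not identically zero on [0,h]) satisfying the quasi-periodicity condition u(h) = e^{iθ}·u(0) and the jump condition e^{−iθ}·p(h) − p(0) = λ·u(0)·∫_h^1 ρ₁; (ii) |F(λ)| ≤ 2. -/
open Set Real

lemma aux_const_of_deriv {E : Type*} [NormedAddCommGroup E] [NormedSpace ℝ E]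
    {g : ℝ → E} {a b : ℝ} (hg : ∀ y ∈ Set.Icc a b, HasDerivAt g 0 y) :
    ∀ y ∈ Set.Icc a b, g y = g a := by
  apply constant_of_has_deriv_right_zero
  · intro y hy
    exact (hg y hy).continuousAt.continuousWithinAt
  · intro y hy
    exact (hg y (Set.Ico_subset_Icc_self hy)).hasDerivWithinAt

/-- Wronskian is constant equal to 1. -/
lemma aux_wronskian (h : ℝ) (a₀ ρ₀ : ℝ → ℝ) (lam : ℝ) (v₁ p₁ v₂ p₂ : ℝ → ℝ)
    (hv₁ : ∀ y ∈ Icc (0:ℝ) h, HasDerivAt v₁ (p₁ y / a₀ y) y)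
    (hp₁ : ∀ y ∈ Icc (0:ℝ) h, HasDerivAt p₁ (-(lam * ρ₀ y * v₁ y)) y)
    (hv₂ : ∀ y ∈ Icc (0:ℝ) h, HasDerivAt v₂ (p₂ y / a₀ y) y)
    (hp₂ : ∀ y ∈ Icc (0:ℝ) h, HasDerivAt p₂ (-(lam * ρ₀ y * v₂ y)) y)
    (hv₁0 : v₁ 0 = 1) (hp₁0 : p₁ 0 = 0) (hv₂0 : v₂ 0 = 0) (hp₂0 : p₂ 0 = 1) :
    ∀ y ∈ Icc (0:ℝ) h, v₁ y * p₂ y - v₂ y * p₁ y = 1 := by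
  intro y hy
  have hc : ∀ z ∈ Icc (0:ℝ) h,
      HasDerivAt (fun t => v₁ t * p₂ t - v₂ t * p₁ t) 0 z := by
    intro z hz
    have : HasDerivAt (fun t => v₁ t * p₂ t - v₂ t * p₁ t) _ z := (((hv₁ z hz).mul (hp₂ z hz)).sub ((hv₂ z hz).mul (hp₁ z hz)))
    convert this using 1
    ring
  have := aux_const_of_deriv hc y hy
  simpa [hv₁0, hp₁0, hv₂0, hp₂0] using this

/-- Representation of a complex solution via the fundamental system. -/
lemma aux_rep (h : ℝ) (a₀ ρ₀ : ℝ → ℝ) (lam : ℝ) (v₁ p₁ v₂ p₂ : ℝ → ℝ)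
    (hv₁ : ∀ y ∈ Icc (0:ℝ) h, HasDerivAt v₁ (p₁ y / a₀ y) y)
    (hp₁ : ∀ y ∈ Icc (0:ℝ) h, HasDerivAt p₁ (-(lam * ρ₀ y * v₁ y)) y)
    (hv₂ : ∀ y ∈ Icc (0:ℝ) h, HasDerivAt v₂ (p₂ y / a₀ y) y)
    (hp₂ : ∀ y ∈ Icc (0:ℝ) h, HasDerivAt p₂ (-(lam * ρ₀ y * v₂ y)) y)
    (hv₁0 : v₁ 0 = 1) (hp₁0 : p₁ 0 = 0) (hv₂0 : v₂ 0 = 0) (hp₂0 : p₂ 0 = 1)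
    (u p : ℝ → ℂ)
    (hu : ∀ y ∈ Icc (0:ℝ) h, HasDerivAt u (p y / (a₀ y : ℂ)) y)
    (hp : ∀ y ∈ Icc (0:ℝ) h, HasDerivAt p (-((lam : ℂ) * (ρ₀ y : ℂ) * u y)) y) :
    ∀ y ∈ Icc (0:ℝ) h,
      u y = u 0 * (v₁ y : ℂ) + p 0 * (v₂ y : ℂ) ∧
      p y = u 0 * (p₁ y : ℂ) + p 0 * (p₂ y : ℂ) := by
  have hA : ∀ y ∈ Icc (0:ℝ) h,
      u y * (p₂ y : ℂ) - p y * (v₂ y : ℂ) = u 0 := by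
    have hc : ∀ z ∈ Icc (0:ℝ) h,
        HasDerivAt (fun t => u t * (p₂ t : ℂ) - p t * (v₂ t : ℂ)) 0 z := by
      intro z hz
      have : HasDerivAt (fun t => u t * (p₂ t : ℂ) - p t * (v₂ t : ℂ)) _ z := ((hu z hz).mul (hp₂ z hz).ofReal_comp).sub
        ((hp z hz).mul (hv₂ z hz).ofReal_comp)
      convert this using 1
      push_cast
      ring
    intro y hy
    have := aux_const_of_deriv hc y hy
    simpa [hv₂0, hp₂0] using this
  have hB : ∀ y ∈ Icc (0:ℝ) h,
      p y * (v₁ y : ℂ) - u y * (p₁ y : ℂ) = p 0 := by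
    have hc : ∀ z ∈ Icc (0:ℝ) h,
        HasDerivAt (fun t => p t * (v₁ t : ℂ) - u t * (p₁ t : ℂ)) 0 z := by
      intro z hz
      have : HasDerivAt (fun t => p t * (v₁ t : ℂ) - u t * (p₁ t : ℂ)) _ z := ((hp z hz).mul (hv₁ z hz).ofReal_comp).sub
        ((hu z hz).mul (hp₁ z hz).ofReal_comp)
      convert this using 1
      push_cast
      ring
    intro y hy
    have := aux_const_of_deriv hc y hy
    simpa [hv₁0, hp₁0] using this
  intro y hy
  have hW : ((v₁ y : ℂ) * p₂ y - v₂ y * p₁ y) = 1 := by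
    exact_mod_cast congrArg (Complex.ofReal)
      (aux_wronskian h a₀ ρ₀ lam v₁ p₁ v₂ p₂ hv₁ hp₁ hv₂ hp₂ hv₁0 hp₁0 hv₂0 hp₂0 y hy)
  constructor
  · linear_combination (v₁ y : ℂ) * hA y hy + (v₂ y : ℂ) * hB y hy - u y * hW
  · linear_combination (p₁ y : ℂ) * hA y hy + (p₂ y : ℂ) * hB y hy - p y * hW



/-- `λ` belongs to the limit spectrum `∪_θ σ(A_θ)` (characterised by the
existence of a nontrivial quasi-periodic solution of the soft-inclusion equation with the
co-derivative jump condition) if and only if `|F(λ)| ≤ 2`, where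
`F(λ) = v₁(h) + p₂(h) − λ v₂(h) ∫_h^1 ρ₁`. -/
theorem limit_spectrum_characterisation
    (h : ℝ) (hh0 : 0 < h) (hh1 : h < 1)
    (a₀ ρ₀ ρ₁ : ℝ → ℝ)
    (ha₀c : ContinuousOn a₀ (Icc 0 h)) (ha₀p : ∀ y ∈ Icc (0:ℝ) h, 0 < a₀ y)
    (hρ₀c : ContinuousOn ρ₀ (Icc 0 h)) (hρ₀p : ∀ y ∈ Icc (0:ℝ) h, 0 < ρ₀ y)
    (hρ₁c : ContinuousOn ρ₁ (Icc h 1)) (hρ₁p : ∀ y ∈ Icc h (1:ℝ), 0 < ρ₁ y)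
    (lam : ℝ) (v₁ p₁ v₂ p₂ : ℝ → ℝ)
    (hv₁ : ∀ y ∈ Icc (0:ℝ) h, HasDerivAt v₁ (p₁ y / a₀ y) y)
    (hp₁ : ∀ y ∈ Icc (0:ℝ) h, HasDerivAt p₁ (-(lam * ρ₀ y * v₁ y)) y)
    (hv₂ : ∀ y ∈ Icc (0:ℝ) h, HasDerivAt v₂ (p₂ y / a₀ y) y)
    (hp₂ : ∀ y ∈ Icc (0:ℝ) h, HasDerivAt p₂ (-(lam * ρ₀ y * v₂ y)) y)
    (hv₁0 : v₁ 0 = 1) (hp₁0 : p₁ 0 = 0) (hv₂0 : v₂ 0 = 0) (hp₂0 : p₂ 0 = 1) :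
    (∃ θ ∈ Ico (0:ℝ) (2 * π), ∃ u p : ℝ → ℂ,
        (∀ y ∈ Icc (0:ℝ) h, HasDerivAt u (p y / (a₀ y : ℂ)) y) ∧
        (∀ y ∈ Icc (0:ℝ) h, HasDerivAt p (-((lam : ℂ) * (ρ₀ y : ℂ) * u y)) y) ∧
        (∃ y ∈ Icc (0:ℝ) h, u y ≠ 0 ∨ p y ≠ 0) ∧
        u h = Complex.exp (θ * Complex.I) * u 0 ∧
        Complex.exp (-θ * Complex.I) * p h - p 0
          = (lam : ℂ) * u 0 * ((∫ y in h..(1:ℝ), ρ₁ y : ℝ) : ℂ))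
      ↔ |v₁ h + p₂ h - lam * v₂ h * ∫ y in h..(1:ℝ), ρ₁ y| ≤ 2 := by
  have hhIcc0 : h ∈ Icc (0:ℝ) h := ⟨le_of_lt hh0, le_refl h⟩
  have hWh : v₁ h * p₂ h - v₂ h * p₁ h = 1 :=
    aux_wronskian h a₀ ρ₀ lam v₁ p₁ v₂ p₂ hv₁ hp₁ hv₂ hp₂ hv₁0 hp₁0 hv₂0 hp₂0 h hhIcc0
  have hrep := aux_rep h a₀ ρ₀ lam v₁ p₁ v₂ p₂ hv₁ hp₁ hv₂ hp₂ hv₁0 hp₁0 hv₂0 hp₂0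
  constructor
  · rintro ⟨θ, hθ, u, p, hu, hp, ⟨y₀, hy₀, hne⟩, hq, hj⟩
    set R : ℝ := ∫ y in h..(1:ℝ), ρ₁ y with hR
    set μ : ℂ := Complex.exp (θ * Complex.I) with hμ
    have hμinv : Complex.exp (-θ * Complex.I) * μ = 1 := by
      rw [hμ, ← Complex.exp_add]
      norm_num
    have habs : ‖μ‖ = 1 := by
      simp [hμ, Complex.norm_exp]
    have hhIcc : h ∈ Icc (0:ℝ) h := ⟨le_of_lt hh0, le_refl h⟩
    obtain ⟨hue, hpe⟩ := hrep u p hu hp h hhIcc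
    have h0 : u 0 ≠ 0 ∨ p 0 ≠ 0 := by
      by_contra hc
      push_neg at hc
      obtain ⟨h1, h2⟩ := hc
      obtain ⟨e1, e2⟩ := hrep u p hu hp y₀ hy₀
      rcases hne with hn | hn
      · exact hn (by rw [e1, h1, h2]; ring)
      · exact hn (by rw [e2, h1, h2]; ring)
    -- eigen equations
    have E1 : (v₁ h : ℂ) * u 0 + (v₂ h : ℂ) * p 0 = μ * u 0 := by
      linear_combination hq - hue
    have hph : p h = μ * p 0 + μ * ((lam : ℂ) * u 0 * (R : ℂ)) := by
      have := congrArg (fun z => μ * z) hj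
      calc p h = μ * (Complex.exp (-θ * Complex.I) * p h) := by
              rw [show μ * (Complex.exp (-θ * Complex.I) * p h)
                  = (Complex.exp (-θ * Complex.I) * μ) * p h by ring, hμinv, one_mul]
        _ = μ * p 0 + μ * ((lam : ℂ) * u 0 * (R : ℂ)) := by linear_combination this
    have E2 : (p₁ h : ℂ) * u 0 + (p₂ h : ℂ) * p 0
        = μ * p 0 + μ * ((lam : ℂ) * (R : ℂ) * u 0) := by
      rw [hpe] at hph
      linear_combination hph
    have hWc : (v₁ h : ℂ) * (p₂ h : ℂ) - (v₂ h : ℂ) * (p₁ h : ℂ) = 1 := by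
      exact_mod_cast congrArg Complex.ofReal hWh
    -- characteristic equation
    set F : ℝ := v₁ h + p₂ h - lam * v₂ h * R with hF
    have hchar : μ ^ 2 - (F : ℂ) * μ + 1 = 0 := by
      have e1 : ((v₁ h : ℂ) - μ) * u 0 + (v₂ h : ℂ) * p 0 = 0 := by
        linear_combination E1
      have e2 : ((p₁ h : ℂ) - (lam : ℂ) * (R : ℂ) * (v₁ h : ℂ)) * u 0
          + ((p₂ h : ℂ) - (lam : ℂ) * (R : ℂ) * (v₂ h : ℂ) - μ) * p 0 = 0 := by
        linear_combination E2 - (lam : ℂ) * (R : ℂ) * E1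
      have hD1 : (μ ^ 2 - (F : ℂ) * μ + 1) * u 0 = 0 := by
        have hFc : (F : ℂ) = (v₁ h : ℂ) + (p₂ h : ℂ) - (lam : ℂ) * (v₂ h : ℂ) * (R : ℂ) := by
          rw [hF]; push_cast; ring
        rw [hFc]
        linear_combination ((p₂ h : ℂ) - (lam : ℂ) * (R : ℂ) * (v₂ h : ℂ) - μ) * e1
          - (v₂ h : ℂ) * e2 - u 0 * hWc
      have hD2 : (μ ^ 2 - (F : ℂ) * μ + 1) * p 0 = 0 := by
        have hFc : (F : ℂ) = (v₁ h : ℂ) + (p₂ h : ℂ) - (lam : ℂ) * (v₂ h : ℂ) * (R : ℂ) := by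
          rw [hF]; push_cast; ring
        rw [hFc]
        linear_combination ((v₁ h : ℂ) - μ) * e2
          - ((p₁ h : ℂ) - (lam : ℂ) * (R : ℂ) * (v₁ h : ℂ)) * e1 - p 0 * hWc
      rcases h0 with h0 | h0
      · exact (mul_eq_zero.mp hD1).resolve_right h0
      · exact (mul_eq_zero.mp hD2).resolve_right h0
    -- conclude
    have key : (F : ℂ) * μ = μ ^ 2 + 1 := by linear_combination -hchar
    have : |F| = ‖μ ^ 2 + 1‖ := by
      rw [← key]
      simp [habs, Complex.norm_real]
    rw [show |v₁ h + p₂ h - lam * v₂ h * ∫ y in h..(1:ℝ), ρ₁ y| = |F| from rfl, this]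
    calc ‖μ ^ 2 + 1‖ ≤ ‖μ ^ 2‖ + ‖(1:ℂ)‖ :=
          norm_add_le (μ ^ 2) 1
      _ = 2 := by
          rw [show ‖μ ^ 2‖ = ‖μ‖ ^ 2 from norm_pow μ 2, habs]
          norm_num
  · intro hFle
    set R : ℝ := ∫ y in h..(1:ℝ), ρ₁ y with hR
    set F : ℝ := v₁ h + p₂ h - lam * v₂ h * R with hF
    set θ : ℝ := Real.arccos (F / 2) with hθdef
    have hF2 : F / 2 ∈ Icc (-1:ℝ) 1 := by
      rw [abs_le] at hFle
      constructor
      · linarith [hFle.1]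
      · linarith [hFle.2]
    have hcos : Real.cos θ = F / 2 := Real.cos_arccos hF2.1 hF2.2
    have hθIco : θ ∈ Ico (0:ℝ) (2 * π) := by
      refine ⟨Real.arccos_nonneg _, lt_of_le_of_lt (Real.arccos_le_pi _) ?_⟩
      linarith [Real.pi_pos]
    set μ : ℂ := Complex.exp (θ * Complex.I) with hμ
    have hμeq : μ = (Real.cos θ : ℂ) + (Real.sin θ : ℂ) * Complex.I := by
      rw [hμ, Complex.exp_mul_I]
      norm_cast
    have hchar : μ ^ 2 - (F : ℂ) * μ + 1 = 0 := by
      have h1 : (Real.sin θ : ℂ) ^ 2 + (Real.cos θ : ℂ) ^ 2 = 1 := by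
        exact_mod_cast congrArg Complex.ofReal (Real.sin_sq_add_cos_sq θ)
      have h2 : (F : ℂ) = 2 * (Real.cos θ : ℂ) := by
        rw [hcos]; push_cast; ring
      rw [hμeq, h2]
      linear_combination (-1 : ℂ) * h1 + Complex.I_sq * ((Real.sin θ:ℂ)^2)
    have hμinv : Complex.exp (-θ * Complex.I) * μ = 1 := by
      rw [hμ, ← Complex.exp_add]
      norm_num
    -- eigenvector
    have hFc : (F : ℂ) = (v₁ h : ℂ) + (p₂ h : ℂ) - (lam : ℂ) * (v₂ h : ℂ) * (R : ℂ) := by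
      rw [hF]; push_cast; ring
    have hWc : (v₁ h : ℂ) * (p₂ h : ℂ) - (v₂ h : ℂ) * (p₁ h : ℂ) = 1 := by
      exact_mod_cast congrArg Complex.ofReal hWh
    obtain ⟨u0, p0, hne0, hE1, hE2⟩ :
        ∃ u0 p0 : ℂ, (u0 ≠ 0 ∨ p0 ≠ 0) ∧
          (v₁ h : ℂ) * u0 + (v₂ h : ℂ) * p0 = μ * u0 ∧
          ((p₁ h : ℂ) - (lam:ℂ)*(R:ℂ)*(v₁ h:ℂ)) * u0
            + ((p₂ h : ℂ) - (lam:ℂ)*(R:ℂ)*(v₂ h:ℂ)) * p0 = μ * p0 := by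
      by_cases hk12 : v₂ h = 0
      · have hfac : (μ - (v₁ h : ℂ)) * (μ - ((p₂ h : ℂ) - (lam:ℂ)*(R:ℂ)*(v₂ h:ℂ))) = 0 := by
          have : (v₂ h : ℂ) = 0 := by exact_mod_cast hk12
          linear_combination hchar + μ * hFc + hWc
            + ((p₁ h : ℂ) - (lam:ℂ)*(R:ℂ)*(v₁ h:ℂ)) * this
        have hv₂c : (v₂ h : ℂ) = 0 := by exact_mod_cast hk12
        by_cases hμ22 : μ = (p₂ h : ℂ) - (lam:ℂ)*(R:ℂ)*(v₂ h:ℂ)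
        · exact ⟨0, 1, Or.inr one_ne_zero, by rw [hv₂c]; ring, by rw [hμ22]; ring⟩
        · have hμ11 : μ = (v₁ h : ℂ) := by
            rcases mul_eq_zero.mp hfac with h' | h'
            · exact sub_eq_zero.mp h'
            · exact absurd (sub_eq_zero.mp h') hμ22
          refine ⟨μ - ((p₂ h : ℂ) - (lam:ℂ)*(R:ℂ)*(v₂ h:ℂ)),
            (p₁ h : ℂ) - (lam:ℂ)*(R:ℂ)*(v₁ h:ℂ), Or.inl (sub_ne_zero.mpr hμ22), ?_, ?_⟩
          · rw [hv₂c, ← hμ11]; ring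
          · ring
      · have hv₂c : (v₂ h : ℂ) ≠ 0 := by exact_mod_cast hk12
        refine ⟨(v₂ h : ℂ), μ - (v₁ h : ℂ), Or.inl hv₂c, by ring, ?_⟩
        linear_combination -hchar - μ * hFc - hWc
    -- construct solution
    refine ⟨θ, hθIco, fun y => u0 * (v₁ y : ℂ) + p0 * (v₂ y : ℂ),
      fun y => u0 * (p₁ y : ℂ) + p0 * (p₂ y : ℂ), ?_, ?_, ?_, ?_, ?_⟩
    · intro y hy
      have : HasDerivAt (fun y => u0 * (v₁ y : ℂ) + p0 * (v₂ y : ℂ)) _ y := (((hv₁ y hy).ofReal_comp).const_mul u0).add (((hv₂ y hy).ofReal_comp).const_mul p0)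
      convert this using 1
      push_cast
      ring
    · intro y hy
      have : HasDerivAt (fun y => u0 * (p₁ y : ℂ) + p0 * (p₂ y : ℂ)) _ y := (((hp₁ y hy).ofReal_comp).const_mul u0).add (((hp₂ y hy).ofReal_comp).const_mul p0)
      convert this using 1
      push_cast
      ring
    · refine ⟨0, ⟨le_refl 0, le_of_lt hh0⟩, ?_⟩
      rcases hne0 with h' | h'
      · exact Or.inl (by simpa [hv₁0, hv₂0] using h')
      · exact Or.inr (by simpa [hp₁0, hp₂0] using h')
    · simp only [hv₁0, hv₂0, ← hμ]
      push_cast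
      linear_combination hE1
    · simp only [hp₁0, hp₂0, hv₁0, hv₂0]
      push_cast
      have hph : u0 * (p₁ h : ℂ) + p0 * (p₂ h : ℂ) = μ * p0 + (lam:ℂ)*(R:ℂ)*(μ * u0) := by
        linear_combination hE2 + (lam:ℂ)*(R:ℂ)*hE1
      rw [hph]
      have : Complex.exp (-θ * Complex.I) * (μ * p0 + (lam:ℂ)*(R:ℂ)*(μ * u0))
          = p0 + (lam:ℂ)*(R:ℂ)*u0 := by
        have := hμinv
        linear_combination (p0 + (lam:ℂ)*(R:ℂ)*u0) * this
      rw [this]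
      ring
end

section
/- Assume a₀ ≡ 1 and ρ₀ ≡ 1 on [0,h] and ρ₁ ≡ 1 on [h,1]. Then for every λ > 0 the fundamental system at λ is v₁(y) = cos(√λ·y), p₁(y) = −√λ·sin(√λ·y), v₂(y) = sin(√λ·y)/√λ, p₂(y) = cos(√λ·y), and F(λ) = 2·cos(√λ·h) − √λ·(1−h)·sin(√λ·h); consequently there exist θ ∈ [0,2π) and a nontrivial quasi-periodic solution (u,p) of the soft-inclusion equation with spectral parameter λ satisfying u(h) = e^{iθ}·u(0) and e^{−iθ}·p(h) − p(0) = λ·u(0)·(1−h) if and only if |2·cos(√λ·h) − √λ·(1−h)·sin(√λ·h)| ≤ 2. -/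
open Set Real

lemma ode_trig {E : Type*} [NormedAddCommGroup E] [NormedSpace ℝ E]
    (s h : ℝ) (hs : 0 < s) (u p : ℝ → E)
    (hu : ∀ y ∈ Icc (0:ℝ) h, HasDerivAt u (p y) y)
    (hp : ∀ y ∈ Icc (0:ℝ) h, HasDerivAt p (-(s^2 • u y)) y) :
    ∀ y ∈ Icc (0:ℝ) h,
      u y = Real.cos (s*y) • u 0 + (Real.sin (s*y)/s) • p 0 ∧
      p y = (-(s * Real.sin (s*y))) • u 0 + Real.cos (s*y) • p 0 := by
  have hs0 : s ≠ 0 := hs.ne'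
  set A : ℝ → E := fun y => Real.cos (s*y) • u y - (Real.sin (s*y)/s) • p y with hA
  set B : ℝ → E := fun y => (s * Real.sin (s*y)) • u y + Real.cos (s*y) • p y with hB
  have hcos : ∀ y : ℝ, HasDerivAt (fun y => Real.cos (s*y)) (-Real.sin (s*y) * s) y := by
    intro y
    simpa [Function.comp_def] using (Real.hasDerivAt_cos (s*y)).comp y ((hasDerivAt_id y).const_mul s)
  have hsin : ∀ y : ℝ, HasDerivAt (fun y => Real.sin (s*y)) (Real.cos (s*y) * s) y := by
    intro y
    simpa [Function.comp_def] using (Real.hasDerivAt_sin (s*y)).comp y ((hasDerivAt_id y).const_mul s)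
  have hAd : ∀ y ∈ Icc (0:ℝ) h, HasDerivAt A 0 y := by
    intro y hy
    have h1 := ((hcos y).smul (hu y hy)).sub
      (((hsin y).div_const s).smul (hp y hy))
    refine h1.congr_deriv ?_
    match_scalars <;> field_simp <;> ring
  have hBd : ∀ y ∈ Icc (0:ℝ) h, HasDerivAt B 0 y := by
    intro y hy
    have h1 := (((hsin y).const_mul s).smul (hu y hy)).add
      ((hcos y).smul (hp y hy))
    refine h1.congr_deriv ?_
    match_scalars <;> ring
  have hAc : ∀ y ∈ Icc (0:ℝ) h, A y = A 0 := by
    intro y hy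
    rcases hy with ⟨hy0, hyh⟩
    refine constant_of_has_deriv_right_zero (a := 0) (b := y)
      (fun z hz => ((hAd z ⟨hz.1, hz.2.trans hyh⟩).continuousAt.continuousWithinAt))
      (fun z hz => ((hAd z ⟨hz.1, hz.2.le.trans hyh⟩).hasDerivWithinAt)) y ⟨hy0, le_rfl⟩
  have hBc : ∀ y ∈ Icc (0:ℝ) h, B y = B 0 := by
    intro y hy
    rcases hy with ⟨hy0, hyh⟩
    refine constant_of_has_deriv_right_zero (a := 0) (b := y)
      (fun z hz => ((hBd z ⟨hz.1, hz.2.trans hyh⟩).continuousAt.continuousWithinAt))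
      (fun z hz => ((hBd z ⟨hz.1, hz.2.le.trans hyh⟩).hasDerivWithinAt)) y ⟨hy0, le_rfl⟩
  have hA0 : A 0 = u 0 := by simp [hA]
  have hB0 : B 0 = p 0 := by simp [hB]
  intro y hy
  have hAy := (hAc y hy).trans hA0
  have hBy := (hBc y hy).trans hB0
  simp only [hA, hB] at hAy hBy
  have hpyth := Real.sin_sq_add_cos_sq (s*y)
  constructor
  · rw [← hAy, ← hBy]
    match_scalars <;> field_simp <;> nlinarith [hpyth]
  · rw [← hAy, ← hBy]
    match_scalars <;> field_simp <;> nlinarith [hpyth]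

/-- In the homogeneous example `a₀ ≡ 1`, `ρ₀ ≡ 1` on `[0,h]`, `ρ₁ ≡ 1` on
`[h,1]`, the fundamental system at `λ > 0` is given by trigonometric functions, `F(λ) =
2cos(√λ h) − √λ (1−h) sin(√λ h)`, and a nontrivial quasi-periodic solution exists iff
`|2cos(√λ h) − √λ (1−h) sin(√λ h)| ≤ 2`. -/
theorem homogeneous_example
    (h : ℝ) (hh0 : 0 < h) (hh1 : h < 1)
    (a₀ ρ₀ ρ₁ : ℝ → ℝ)
    (ha₀ : ∀ y ∈ Icc (0:ℝ) h, a₀ y = 1)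
    (hρ₀ : ∀ y ∈ Icc (0:ℝ) h, ρ₀ y = 1)
    (hρ₁ : ∀ y ∈ Icc h (1:ℝ), ρ₁ y = 1)
    (lam : ℝ) (hlam : 0 < lam)
    (v₁ p₁ v₂ p₂ : ℝ → ℝ)
    (hv₁ : ∀ y ∈ Icc (0:ℝ) h, HasDerivAt v₁ (p₁ y / a₀ y) y)
    (hp₁ : ∀ y ∈ Icc (0:ℝ) h, HasDerivAt p₁ (-(lam * ρ₀ y * v₁ y)) y)
    (hv₂ : ∀ y ∈ Icc (0:ℝ) h, HasDerivAt v₂ (p₂ y / a₀ y) y)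
    (hp₂ : ∀ y ∈ Icc (0:ℝ) h, HasDerivAt p₂ (-(lam * ρ₀ y * v₂ y)) y)
    (hv₁0 : v₁ 0 = 1) (hp₁0 : p₁ 0 = 0) (hv₂0 : v₂ 0 = 0) (hp₂0 : p₂ 0 = 1) :
    (∀ y ∈ Icc (0:ℝ) h,
        v₁ y = Real.cos (Real.sqrt lam * y) ∧
        p₁ y = -Real.sqrt lam * Real.sin (Real.sqrt lam * y) ∧
        v₂ y = Real.sin (Real.sqrt lam * y) / Real.sqrt lam ∧
        p₂ y = Real.cos (Real.sqrt lam * y)) ∧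
    (v₁ h + p₂ h - lam * v₂ h * ∫ y in h..(1:ℝ), ρ₁ y
        = 2 * Real.cos (Real.sqrt lam * h)
          - Real.sqrt lam * (1 - h) * Real.sin (Real.sqrt lam * h)) ∧
    ((∃ θ ∈ Ico (0:ℝ) (2 * π), ∃ u p : ℝ → ℂ,
        (∀ y ∈ Icc (0:ℝ) h, HasDerivAt u (p y / (a₀ y : ℂ)) y) ∧
        (∀ y ∈ Icc (0:ℝ) h, HasDerivAt p (-((lam : ℂ) * (ρ₀ y : ℂ) * u y)) y) ∧
        (∃ y ∈ Icc (0:ℝ) h, u y ≠ 0 ∨ p y ≠ 0) ∧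
        u h = Complex.exp (θ * Complex.I) * u 0 ∧
        Complex.exp (-θ * Complex.I) * p h - p 0 = (lam : ℂ) * u 0 * ((1 - h : ℝ) : ℂ))
      ↔ |2 * Real.cos (Real.sqrt lam * h)
          - Real.sqrt lam * (1 - h) * Real.sin (Real.sqrt lam * h)| ≤ 2) := by
  set s := Real.sqrt lam with hsdef
  have hs : 0 < s := Real.sqrt_pos.mpr hlam
  have hs0 : s ≠ 0 := hs.ne'
  have hs2 : s^2 = lam := Real.sq_sqrt hlam.le
  have hmemh : h ∈ Icc (0:ℝ) h := ⟨hh0.le, le_rfl⟩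
  have fund1 := ode_trig s h hs v₁ p₁
    (fun y hy => by simpa [ha₀ y hy] using hv₁ y hy)
    (fun y hy => by simpa [hρ₀ y hy, smul_eq_mul, hs2] using hp₁ y hy)
  have fund2 := ode_trig s h hs v₂ p₂
    (fun y hy => by simpa [ha₀ y hy] using hv₂ y hy)
    (fun y hy => by simpa [hρ₀ y hy, smul_eq_mul, hs2] using hp₂ y hy)
  have part1 : ∀ y ∈ Icc (0:ℝ) h,
      v₁ y = Real.cos (s * y) ∧
      p₁ y = -s * Real.sin (s * y) ∧
      v₂ y = Real.sin (s * y) / s ∧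
      p₂ y = Real.cos (s * y) := by
    intro y hy
    obtain ⟨e1, e2⟩ := fund1 y hy
    obtain ⟨e3, e4⟩ := fund2 y hy
    rw [hv₁0, hp₁0] at e1 e2
    rw [hv₂0, hp₂0] at e3 e4
    refine ⟨?_, ?_, ?_, ?_⟩ <;>
      simp only [e1, e2, e3, e4, smul_eq_mul, mul_one, mul_zero, add_zero, zero_add] <;> ring
  have part2 : v₁ h + p₂ h - lam * v₂ h * ∫ y in h..(1:ℝ), ρ₁ y
      = 2 * Real.cos (s * h) - s * (1 - h) * Real.sin (s * h) := by
    obtain ⟨e1, _, e3, e4⟩ := part1 h hmemh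
    have hint : (∫ y in h..(1:ℝ), ρ₁ y) = 1 - h := by
      rw [intervalIntegral.integral_congr (g := fun _ => (1:ℝ))
        (fun y hy => hρ₁ y (by rwa [uIcc_of_le hh1.le] at hy))]
      simp
    rw [e1, e3, e4, hint, ← hs2]
    field_simp
    ring
  refine ⟨part1, part2, ?_⟩
  -- Part 3
  set c := Real.cos (s * h) with hc
  set σ := Real.sin (s * h) with hσdef
  set F := 2 * c - s * (1 - h) * σ with hFdef
  set HC : ℂ := ((1 - h : ℝ) : ℂ) with hHC
  have hpythC : (σ:ℂ)^2 + (c:ℂ)^2 = 1 := by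
    exact_mod_cast Real.sin_sq_add_cos_sq (s*h)
  have hs2C : (s:ℂ)^2 = (lam:ℂ) := by exact_mod_cast hs2
  have hFc : (F:ℂ) = 2*(c:ℂ) - (s:ℂ)*HC*(σ:ℂ) := by
    rw [hFdef, hHC]; push_cast; ring
  have hsC0 : (s:ℂ) ≠ 0 := by exact_mod_cast hs0
  constructor
  · rintro ⟨θ, hθ, u, p, hu, hp, ⟨y0, hy0, hne⟩, hbc1, hbc2⟩
    set μ := Complex.exp (↑θ * Complex.I) with hμdef
    set ν := Complex.exp (-↑θ * Complex.I) with hνdef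
    have hν : μ * ν = 1 := by
      rw [hμdef, hνdef, ← Complex.exp_add,
        show ((θ:ℂ) * Complex.I + -(θ:ℂ) * Complex.I) = 0 by ring, Complex.exp_zero]
    have fundc := ode_trig s h hs u p
      (fun y hy => by simpa [ha₀ y hy] using hu y hy)
      (fun y hy => by
        have h1 : -((lam:ℂ) * ((ρ₀ y : ℝ):ℂ) * u y) = -(s^2 • u y) := by
          rw [hρ₀ y hy, Complex.real_smul, ← hs2]; push_cast; ring
        have := hp y hy
        rwa [h1] at this)
    obtain ⟨huh, hph⟩ := fundc h hmemh
    simp only [Complex.real_smul] at huh hph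
    have hAB : ¬(u 0 = 0 ∧ p 0 = 0) := by
      rintro ⟨hA0, hB0⟩
      obtain ⟨e1, e2⟩ := fundc y0 hy0
      rcases hne with hne | hne
      · exact hne (by rw [e1, hA0, hB0]; simp)
      · exact hne (by rw [e2, hA0, hB0]; simp)
    -- clean boundary equations
    have hd : ((σ/s : ℝ) : ℂ) * (s:ℂ) = (σ:ℂ) := by
      push_cast; field_simp
    have h1 : μ * u 0 = (c:ℂ) * u 0 + ((σ/s : ℝ):ℂ) * p 0 := hbc1.symm.trans huh
    have e1' : ((c:ℂ) - μ) * (s:ℂ) * u 0 + (σ:ℂ) * p 0 = 0 := by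
      linear_combination (-(s:ℂ)) * h1 - p 0 * hd
    have hneg : ((-(s*σ) : ℝ):ℂ) = -((s:ℂ) * (σ:ℂ)) := by push_cast; ring
    rw [hph, hneg] at hbc2
    have e2' : -((s:ℂ)*(σ:ℂ)) * u 0 + (c:ℂ) * p 0 - μ * p 0 - μ * (lam:ℂ) * HC * u 0 = 0 := by
      linear_combination μ * hbc2 - (-((s:ℂ)*(σ:ℂ)) * u 0 + (c:ℂ) * p 0) * hν
    have hD : μ^2 - (2*(c:ℂ) - (s:ℂ)*HC*(σ:ℂ))*μ + 1 = 0 := by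
      by_cases hA : u 0 = 0
      · have hB : p 0 ≠ 0 := fun hB => hAB ⟨hA, hB⟩
        rw [hA] at e1' e2'
        have hσ0 : (σ:ℂ) = 0 := by
          have h2 : (σ:ℂ) * p 0 = 0 := by linear_combination e1'
          exact (mul_eq_zero.mp h2).resolve_right hB
        have hcμ : (c:ℂ) = μ := by
          have h2 : ((c:ℂ) - μ) * p 0 = 0 := by linear_combination e2'
          exact sub_eq_zero.mp ((mul_eq_zero.mp h2).resolve_right hB)
        rw [← hcμ, hσ0]
        linear_combination (-1 : ℂ) * hpythC + (σ:ℂ) * hσ0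
      · have key : (μ^2 - (2*(c:ℂ) - (s:ℂ)*HC*(σ:ℂ))*μ + 1) * ((s:ℂ) * u 0) = 0 := by
          linear_combination ((c:ℂ) - μ) * e1' - (σ:ℂ) * e2' + (-(s:ℂ) * u 0) * hpythC
            + (HC*(σ:ℂ)*μ*u 0) * hs2C
        rcases mul_eq_zero.mp key with hk | hk
        · linear_combination hk
        · exact absurd ((mul_eq_zero.mp hk).resolve_left hsC0) hA
    -- conclude |F| ≤ 2
    have hFθ : (F:ℂ) = μ + ν := by
      linear_combination (-ν) * hD + (μ - (2*(c:ℂ) - (s:ℂ)*HC*(σ:ℂ))) * hν + hFc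
    have hμ' : μ = Complex.cos θ + Complex.sin θ * Complex.I := by
      rw [hμdef, Complex.exp_mul_I]
    have hν' : ν = Complex.cos θ - Complex.sin θ * Complex.I := by
      rw [hνdef, show (-(θ:ℂ) * Complex.I) = ((-θ:ℂ)) * Complex.I by ring,
        Complex.exp_mul_I, Complex.cos_neg, Complex.sin_neg]
      ring
    have hsum : μ + ν = ((2 * Real.cos θ : ℝ):ℂ) := by
      rw [hμ', hν', ← Complex.ofReal_cos]
      push_cast
      ring
    have hFr : F = 2 * Real.cos θ := by
      exact_mod_cast hFθ.trans hsum
    rw [hFr, abs_mul, abs_two]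
    nlinarith [Real.abs_cos_le_one θ, abs_nonneg (Real.cos θ)]
  · intro hFle
    have hF2 : -1 ≤ F/2 ∧ F/2 ≤ 1 := by
      rw [abs_le] at hFle; constructor <;> linarith
    set θ := Real.arccos (F/2) with hθdef
    have hθmem : θ ∈ Ico (0:ℝ) (2*π) := ⟨Real.arccos_nonneg _,
      lt_of_le_of_lt (Real.arccos_le_pi _) (by nlinarith [Real.pi_pos])⟩
    have hcosθ : Real.cos θ = F/2 := Real.cos_arccos hF2.1 hF2.2
    set μ := Complex.exp (↑θ * Complex.I) with hμdef
    set ν := Complex.exp (-↑θ * Complex.I) with hνdef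
    have hν : μ * ν = 1 := by
      rw [hμdef, hνdef, ← Complex.exp_add,
        show ((θ:ℂ) * Complex.I + -(θ:ℂ) * Complex.I) = 0 by ring, Complex.exp_zero]
    have hμ' : μ = Complex.cos θ + Complex.sin θ * Complex.I := by
      rw [hμdef, Complex.exp_mul_I]
    have hν' : ν = Complex.cos θ - Complex.sin θ * Complex.I := by
      rw [hνdef, show (-(θ:ℂ) * Complex.I) = ((-θ:ℂ)) * Complex.I by ring,
        Complex.exp_mul_I, Complex.cos_neg, Complex.sin_neg]
      ring
    have hsum : μ + ν = (F:ℂ) := by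
      rw [hμ', hν',
        show Complex.cos θ + Complex.sin θ * Complex.I
          + (Complex.cos θ - Complex.sin θ * Complex.I) = 2 * Complex.cos (θ:ℂ) by ring,
        ← Complex.ofReal_cos, hcosθ]
      push_cast
      ring
    have hD : μ^2 - (2*(c:ℂ) - (s:ℂ)*HC*(σ:ℂ))*μ + 1 = 0 := by
      have hD0 : μ^2 - (F:ℂ)*μ + 1 = 0 := by
        linear_combination μ * hsum - hν
      linear_combination hD0 + μ * hFc
    have hμne : μ ≠ 0 := Complex.exp_ne_zero _
    obtain ⟨A, B, hABne, E1, E2⟩ : ∃ A B : ℂ, (A ≠ 0 ∨ B ≠ 0) ∧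
        ((c:ℂ) - μ) * (s:ℂ) * A + (σ:ℂ) * B = 0 ∧
        -((s:ℂ)*(σ:ℂ)) * A + (c:ℂ) * B - μ * B - μ * (lam:ℂ) * HC * A = 0 := by
      by_cases hσ : σ = 0
      · refine ⟨(c:ℂ) - μ, μ * (lam:ℂ) * HC, Or.inr ?_, ?_, ?_⟩
        · apply mul_ne_zero (mul_ne_zero hμne ?_) ?_
          · exact_mod_cast hlam.ne'
          · rw [hHC]
            exact_mod_cast (by linarith : (1:ℝ) - h ≠ 0)
        · have hσC : (σ:ℂ) = 0 := by exact_mod_cast hσ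
          linear_combination (s:ℂ) * hD + (s:ℂ) * hpythC
            + ((μ * (lam:ℂ) * HC) - (s:ℂ)*(σ:ℂ) - (s:ℂ)^2*HC*μ) * hσC
        · have hσC : (σ:ℂ) = 0 := by exact_mod_cast hσ
          linear_combination (-(s:ℂ)*((c:ℂ)-μ)) * hσC
      · refine ⟨(σ:ℂ), (μ - (c:ℂ)) * (s:ℂ), Or.inl (by exact_mod_cast hσ), by ring, ?_⟩
        linear_combination (-(s:ℂ)) * hD + (-(s:ℂ)) * hpythC + (μ*HC*(σ:ℂ)) * hs2C
    refine ⟨θ, hθmem,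
      fun y => ((Real.cos (s*y) : ℝ):ℂ) * A + ((Real.sin (s*y) : ℝ):ℂ) * (B / (s:ℂ)),
      fun y => -(((Real.sin (s*y) : ℝ):ℂ) * (s:ℂ)) * A + ((Real.cos (s*y) : ℝ):ℂ) * B,
      ?_, ?_, ?_, ?_, ?_⟩
    · intro y hy
      have hcosR : HasDerivAt (fun y => Real.cos (s*y)) (-Real.sin (s*y) * s) y := by
        simpa [Function.comp_def] using (Real.hasDerivAt_cos (s*y)).comp y ((hasDerivAt_id y).const_mul s)
      have hsinR : HasDerivAt (fun y => Real.sin (s*y)) (Real.cos (s*y) * s) y := by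
        simpa [Function.comp_def] using (Real.hasDerivAt_sin (s*y)).comp y ((hasDerivAt_id y).const_mul s)
      have h1 := ((hcosR.ofReal_comp).mul_const A).add ((hsinR.ofReal_comp).mul_const (B / (s:ℂ)))
      refine h1.congr_deriv ?_
      rw [ha₀ y hy]
      push_cast
      field_simp
    · intro y hy
      have hcosR : HasDerivAt (fun y => Real.cos (s*y)) (-Real.sin (s*y) * s) y := by
        simpa [Function.comp_def] using (Real.hasDerivAt_cos (s*y)).comp y ((hasDerivAt_id y).const_mul s)
      have hsinR : HasDerivAt (fun y => Real.sin (s*y)) (Real.cos (s*y) * s) y := by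
        simpa [Function.comp_def] using (Real.hasDerivAt_sin (s*y)).comp y ((hasDerivAt_id y).const_mul s)
      have h1 := ((((hsinR.ofReal_comp).mul_const ((s:ℂ))).neg).mul_const A).add
        ((hcosR.ofReal_comp).mul_const B)
      refine h1.congr_deriv ?_
      rw [hρ₀ y hy, show ((lam:ℝ):ℂ) = (s:ℂ)^2 from hs2C.symm]
      push_cast
      field_simp
      ring
    · refine ⟨0, ⟨le_rfl, hh0.le⟩, ?_⟩
      rcases hABne with hA | hB
      · left
        simpa [mul_zero] using hA
      · right
        simpa [mul_zero] using hB
    · show ((c : ℝ):ℂ) * A + ((σ : ℝ):ℂ) * (B / (s:ℂ)) = μ * _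
      simp only [mul_zero, Real.cos_zero, Real.sin_zero, Complex.ofReal_one,
        Complex.ofReal_zero, one_mul, zero_mul, add_zero]
      field_simp
      linear_combination E1
    · show ν * _ - _ = (lam:ℂ) * _ * HC
      simp only [mul_zero, Real.cos_zero, Real.sin_zero, Complex.ofReal_one,
        Complex.ofReal_zero, one_mul, zero_mul, add_zero, zero_add, neg_zero]
      linear_combination ν * E2 + (B + (lam:ℂ)*HC*A) * hν
end

section
/- Let λ₀ ∈ ℝ, let (v₁,p₁),(v₂,p₂) be the fundamental system at λ₀ and set R := ∫_h^1 ρ₁. Let z ∈ ℤ and l_z, m_z, l_{z+1}, m_{z+1} ∈ ℂ, and suppose the continuity condition l_{z+1} = l_z·v₁(h) + m_z·v₂(h) and the co-derivative jump condition m_{z+1} − (l_z·p₁(h) + m_z·p₂(h)) = −λ₀·(l_z·v₁(h) + m_z·v₂(h))·R hold. Then the vector (l_{z+1}, m_{z+1}) equals T applied to (l_z, m_z), where T is the 2×2 matrix with rows (v₁(h), v₂(h)) and (p₁(h) − λ₀·v₁(h)·R, p₂(h) − λ₀·v₂(h)·R). Moreover det T = 1 and trace T = F(λ₀), so the characteristic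 polynomial of T is μ² − F(λ₀)·μ + 1. -/
open Set

/-- The one-period transfer relation of the homogenised problem: the
continuity and co-derivative jump conditions for the coefficients `(l_z, m_z)` are equivalent
to multiplication by the monodromy matrix `T`, which has determinant `1`, trace `F(λ₀)`, and
characteristic polynomial `μ² − F(λ₀)μ + 1`. -/
theorem monodromy_matrix
    (h : ℝ) (hh0 : 0 < h) (hh1 : h < 1)
    (a₀ ρ₀ ρ₁ : ℝ → ℝ)
    (ha₀c : ContinuousOn a₀ (Icc 0 h)) (ha₀p : ∀ y ∈ Icc (0:ℝ) h, 0 < a₀ y)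
    (hρ₀c : ContinuousOn ρ₀ (Icc 0 h)) (hρ₀p : ∀ y ∈ Icc (0:ℝ) h, 0 < ρ₀ y)
    (hρ₁c : ContinuousOn ρ₁ (Icc h 1)) (hρ₁p : ∀ y ∈ Icc h (1:ℝ), 0 < ρ₁ y)
    (lam₀ : ℝ) (v₁ p₁ v₂ p₂ : ℝ → ℝ)
    (hv₁ : ∀ y ∈ Icc (0:ℝ) h, HasDerivAt v₁ (p₁ y / a₀ y) y)
    (hp₁ : ∀ y ∈ Icc (0:ℝ) h, HasDerivAt p₁ (-(lam₀ * ρ₀ y * v₁ y)) y)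
    (hv₂ : ∀ y ∈ Icc (0:ℝ) h, HasDerivAt v₂ (p₂ y / a₀ y) y)
    (hp₂ : ∀ y ∈ Icc (0:ℝ) h, HasDerivAt p₂ (-(lam₀ * ρ₀ y * v₂ y)) y)
    (hv₁0 : v₁ 0 = 1) (hp₁0 : p₁ 0 = 0) (hv₂0 : v₂ 0 = 0) (hp₂0 : p₂ 0 = 1)
    (R : ℝ) (hR : R = ∫ y in h..(1:ℝ), ρ₁ y)
    (z : ℤ) (l m : ℤ → ℂ)
    (hcont : l (z + 1) = l z * (v₁ h : ℂ) + m z * (v₂ h : ℂ))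
    (hjump : m (z + 1) - (l z * (p₁ h : ℂ) + m z * (p₂ h : ℂ))
      = -(lam₀ : ℂ) * (l z * (v₁ h : ℂ) + m z * (v₂ h : ℂ)) * (R : ℂ)) :
    (![l (z + 1), m (z + 1)]
        = Matrix.mulVec
            !![(v₁ h : ℂ), (v₂ h : ℂ);
               ((p₁ h - lam₀ * v₁ h * R : ℝ) : ℂ), ((p₂ h - lam₀ * v₂ h * R : ℝ) : ℂ)]
            ![l z, m z]) ∧
    (Matrix.det
        !![(v₁ h : ℂ), (v₂ h : ℂ);
           ((p₁ h - lam₀ * v₁ h * R : ℝ) : ℂ), ((p₂ h - lam₀ * v₂ h * R : ℝ) : ℂ)] = 1) ∧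
    (Matrix.trace
        !![(v₁ h : ℂ), (v₂ h : ℂ);
           ((p₁ h - lam₀ * v₁ h * R : ℝ) : ℂ), ((p₂ h - lam₀ * v₂ h * R : ℝ) : ℂ)]
      = ((v₁ h + p₂ h - lam₀ * v₂ h * R : ℝ) : ℂ)) ∧
    (∀ μ : ℂ,
      Matrix.det
        (μ • (1 : Matrix (Fin 2) (Fin 2) ℂ)
          - !![(v₁ h : ℂ), (v₂ h : ℂ);
               ((p₁ h - lam₀ * v₁ h * R : ℝ) : ℂ), ((p₂ h - lam₀ * v₂ h * R : ℝ) : ℂ)])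
      = μ ^ 2 - ((v₁ h + p₂ h - lam₀ * v₂ h * R : ℝ) : ℂ) * μ + 1) := by
 -- Wronskian is constant on [0,h]
  have hW : v₁ h * p₂ h - v₂ h * p₁ h = 1 := by
    set W : ℝ → ℝ := fun y => v₁ y * p₂ y - v₂ y * p₁ y with hWdef
    have hWd : ∀ y ∈ Icc (0:ℝ) h, HasDerivAt W 0 y := by
      intro y hy
      have := (((hv₁ y hy).mul (hp₂ y hy)).sub ((hv₂ y hy).mul (hp₁ y hy)))
      refine this.congr_deriv ?_
      have ha : a₀ y ≠ 0 := ne_of_gt (ha₀p y hy)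
      ring
    have hWc : ContinuousOn W (Icc 0 h) := fun y hy => ((hWd y hy).continuousAt).continuousWithinAt
    have := constant_of_has_deriv_right_zero hWc
      (fun y hy => ((hWd y (Ico_subset_Icc_self hy)).hasDerivWithinAt))
      h (right_mem_Icc.2 hh0.le)
    have h0 : W 0 = 1 := by simp [hWdef, hv₁0, hp₁0, hv₂0, hp₂0]
    show W h = 1
    rw [this]; exact h0
  refine ⟨?_, ?_, ?_, ?_⟩
  · funext i
    fin_cases i
    · simpa [Matrix.mulVec, dotProduct, mul_comm] using hcont
    · have : m (z + 1) = l z * ((p₁ h - lam₀ * v₁ h * R : ℝ) : ℂ)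
          + m z * ((p₂ h - lam₀ * v₂ h * R : ℝ) : ℂ) := by
        push_cast
        linear_combination hjump
      simpa [Matrix.mulVec, dotProduct, mul_comm] using this
  · rw [Matrix.det_fin_two_of]
    have hWc : ((v₁ h : ℂ) * p₂ h - v₂ h * p₁ h) = 1 := by exact_mod_cast hW
    push_cast
    linear_combination hWc
  · rw [Matrix.trace_fin_two_of]
    push_cast
    ring
  · intro μ
    have hWc : ((v₁ h : ℂ) * p₂ h - v₂ h * p₁ h) = 1 := by exact_mod_cast hW
    rw [Matrix.det_fin_two]
    push_cast
    simp [Matrix.one_apply]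
    linear_combination hWc
end

section
/- Let λ_ε ∈ ℝ for ε ∈ (0,1) with λ_ε → λ₀ as ε → 0. For each ε let (v₁^ε,p₁^ε),(v₂^ε,p₂^ε) be the fundamental system at λ_ε on the soft interval and let (w₁^ε,q₁^ε),(w₂^ε,q₂^ε) be the stiff fundamental system at (λ_ε,ε), and define h_ε := v₁^ε(h)·w₁^ε(1) + ε²·p₁^ε(h)·w₂^ε(1) + ε^{−2}·v₂^ε(h)·q₁^ε(1) + p₂^ε(h)·q₂^ε(1). Then h_ε → v₁(h) + p₂(h) − λ₀·v₂(h)·∫_h^1 ρ₁ as ε → 0, where (v₁,p₁),(v₂,p₂) is the fundamental system at λ₀ on the soft interval. -/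
open Set Filter Topology Real


lemma gronwallBound_zero_eta {K η x : ℝ} (hK : K ≠ 0) :
    gronwallBound 0 K η x = η * ((Real.exp (K * x) - 1) / K) := by
  simp only [gronwallBound_of_K_ne_0 hK]
  ring

lemma tendsto_of_abs_sub_le {α : Type*} {l : Filter α} {f g : α → ℝ} {a : ℝ}
    (hb : ∀ᶠ x in l, |f x - a| ≤ g x) (hg : Tendsto g l (𝓝 0)) :
    Tendsto f l (𝓝 a) := by
  rw [tendsto_iff_dist_tendsto_zero]
  exact squeeze_zero' (Eventually.of_forall fun x => dist_nonneg)
    (hb.mono fun x hx => by rw [Real.dist_eq]; exact hx) hg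


lemma gron2 {s t : ℝ} {v p v' p' : ℝ → ℝ} {K η δ : ℝ}
    (hv : ∀ y ∈ Icc s t, HasDerivAt v (v' y) y)
    (hp : ∀ y ∈ Icc s t, HasDerivAt p (p' y) y)
    (hb : ∀ y ∈ Icc s t, |v' y| ≤ K * max |v y| |p y| + η ∧
      |p' y| ≤ K * max |v y| |p y| + η)
    (hδ : max |v s| |p s| ≤ δ) :
    ∀ y ∈ Icc s t, max |v y| |p y| ≤ gronwallBound δ K η (y - s) := by
  have hnorm : ∀ y, ‖(v y, p y)‖ = max |v y| |p y| := by
    intro y; simp [Prod.norm_def, Real.norm_eq_abs]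
  intro y hy
  have H := norm_le_gronwallBound_of_norm_deriv_right_le
    (f := fun x => (v x, p x)) (f' := fun x => (v' x, p' x)) (a := s) (b := t)
    (δ := δ) (K := K) (ε := η)
    (fun x hx => ((hv x hx).prodMk (hp x hx)).continuousAt.continuousWithinAt)
    (fun x hx => (((hv x (Ico_subset_Icc_self hx)).prodMk
      (hp x (Ico_subset_Icc_self hx))).hasDerivWithinAt))
    (by rw [hnorm]; exact hδ)
    (fun x hx => by
      rw [hnorm]
      have := hb x (Ico_subset_Icc_self hx)
      simp only [Prod.norm_def, Real.norm_eq_abs]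
      exact max_le this.1 this.2)
  have := H y hy
  rwa [hnorm] at this

lemma soft_key {s t A R L M K : ℝ} {a ρ V P : ℝ → ℝ} {lam₀ μ : ℝ}
    (hA : 0 < A) (haA : ∀ y ∈ Icc s t, A ≤ a y)
    (hR : ∀ y ∈ Icc s t, |ρ y| ≤ R)
    (hM : ∀ y ∈ Icc s t, |V y| ≤ M) (hM0 : 0 ≤ M) (hR0 : 0 ≤ R)
    (hμ : |μ| ≤ L)
    (hK : K = max (1/A) (L * R) + 1)
    {Vε Pε : ℝ → ℝ}
    (hVε : ∀ y ∈ Icc s t, HasDerivAt Vε (Pε y / a y) y)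
    (hPε : ∀ y ∈ Icc s t, HasDerivAt Pε (-(μ * ρ y * Vε y)) y)
    (hV : ∀ y ∈ Icc s t, HasDerivAt V (P y / a y) y)
    (hP : ∀ y ∈ Icc s t, HasDerivAt P (-(lam₀ * ρ y * V y)) y)
    (hICv : Vε s = V s) (hICp : Pε s = P s) :
    ∀ y ∈ Icc s t, max |Vε y - V y| |Pε y - P y| ≤
      gronwallBound 0 K (|μ - lam₀| * (R * M)) (y - s) := by
  have hL0 : 0 ≤ L := le_trans (abs_nonneg μ) hμ
  have hK1 : 1/A ≤ K := by rw [hK]; nlinarith [le_max_left (1/A) (L*R)]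
  have hK2 : L * R ≤ K := by rw [hK]; nlinarith [le_max_right (1/A) (L*R)]
  apply gron2 (v' := fun y => (Pε y - P y) / a y)
    (p' := fun y => -(μ * ρ y * (Vε y - V y)) - (μ - lam₀) * ρ y * V y)
  · intro y hy
    have := (hVε y hy).sub (hV y hy)
    rwa [div_sub_div_same] at this
  · intro y hy
    have := (hPε y hy).sub (hP y hy)
    exact this.congr_deriv (by ring)
  · intro y hy
    have hAy : 0 < a y := lt_of_lt_of_le hA (haA y hy)
    constructor
    · have h1 : |(Pε y - P y) / a y| = |Pε y - P y| / a y := by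
        rw [abs_div, abs_of_pos hAy]
      have h2 : |Pε y - P y| / a y ≤ |Pε y - P y| / A :=
        div_le_div_of_nonneg_left (abs_nonneg _) hA (haA y hy)
      have hKpos : (0:ℝ) ≤ K := le_trans (by positivity) hK1
      have h3 : |Pε y - P y| / A ≤ K * max |Vε y - V y| |Pε y - P y| := by
        have he : |Pε y - P y| / A = (1/A) * |Pε y - P y| := by ring
        rw [he]
        exact mul_le_mul hK1 (le_max_right _ _) (abs_nonneg _) hKpos
      have h4 : (0:ℝ) ≤ |μ - lam₀| * (R * M) := by positivity
      linarith [h1 ▸ h2]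
    · have h1 : |-(μ * ρ y * (Vε y - V y)) - (μ - lam₀) * ρ y * V y| ≤
          |μ| * |ρ y| * |Vε y - V y| + |μ - lam₀| * |ρ y| * |V y| := by
        calc _ ≤ |-(μ * ρ y * (Vε y - V y))| + |(μ - lam₀) * ρ y * V y| :=
              abs_sub _ _
          _ = |μ| * |ρ y| * |Vε y - V y| + |μ - lam₀| * |ρ y| * |V y| := by
              rw [abs_neg, abs_mul, abs_mul, abs_mul, abs_mul]
      have hKpos : (0:ℝ) ≤ K := le_trans (by positivity) hK1
      have h2 : |μ| * |ρ y| * |Vε y - V y| ≤ K * max |Vε y - V y| |Pε y - P y| := by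
        calc |μ| * |ρ y| * |Vε y - V y| ≤ L * R * |Vε y - V y| :=
              mul_le_mul (mul_le_mul hμ (hR y hy) (abs_nonneg _) hL0) le_rfl
                (abs_nonneg _) (by positivity)
          _ ≤ K * max |Vε y - V y| |Pε y - P y| :=
              mul_le_mul hK2 (le_max_left _ _) (abs_nonneg _) hKpos
      have h3 : |μ - lam₀| * |ρ y| * |V y| ≤ |μ - lam₀| * (R * M) := by
        rw [mul_assoc]; gcongr; exacts [hR y hy, hM y hy]
      linarith
  · simp [hICv, hICp]

lemma stiff_key {s t A R L K M₁ : ℝ} (hst : s ≤ t)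
    {a ρ W Q : ℝ → ℝ} {μ c : ℝ}
    (hA : 0 < A) (haA : ∀ y ∈ Icc s t, A ≤ a y)
    (hR : ∀ y ∈ Icc s t, |ρ y| ≤ R) (hR0 : 0 ≤ R)
    (hμ : |μ| ≤ L) (hL0 : 0 ≤ L) (hc : |c| ≤ 1)
    (hK : K = max (1/A) (L * R) + 1)
    (hM₁ : M₁ = Real.exp (K * (t - s)))
    (hW : ∀ y ∈ Icc s t, HasDerivAt W (Q y / a y) y)
    (hQ : ∀ y ∈ Icc s t, HasDerivAt Q (-(c * μ * ρ y * W y)) y)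
    (hIC : max |W s| |Q s| ≤ 1) :
    (∀ y ∈ Icc s t, max |W y| |Q y| ≤ M₁) ∧
    (∀ y ∈ Icc s t, |Q y - Q s| ≤ |c| * (L * R * M₁) * (t - s)) := by
  have hK1 : 1/A ≤ K := by rw [hK]; nlinarith [le_max_left (1/A) (L*R)]
  have hK2 : L * R ≤ K := by rw [hK]; nlinarith [le_max_right (1/A) (L*R)]
  have hKpos : (0:ℝ) ≤ K := le_trans (by positivity) hK1
  have G : ∀ y ∈ Icc s t, max |W y| |Q y| ≤ gronwallBound 1 K 0 (y - s) := by
    apply gron2 hW hQ _ hIC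
    intro y hy
    have hAy : 0 < a y := lt_of_lt_of_le hA (haA y hy)
    constructor
    · have h1 : |Q y / a y| = |Q y| / a y := by rw [abs_div, abs_of_pos hAy]
      have h2 : |Q y| / a y ≤ |Q y| / A :=
        div_le_div_of_nonneg_left (abs_nonneg _) hA (haA y hy)
      have h3 : |Q y| / A ≤ K * max |W y| |Q y| := by
        have he : |Q y| / A = (1/A) * |Q y| := by ring
        rw [he]
        exact mul_le_mul hK1 (le_max_right _ _) (abs_nonneg _) hKpos
      linarith [h1 ▸ h2]
    · have h1 : |-(c * μ * ρ y * W y)| = |c| * |μ| * |ρ y| * |W y| := by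
        rw [abs_neg, abs_mul, abs_mul, abs_mul]
      have h2 : |c| * |μ| * |ρ y| * |W y| ≤ L * R * |W y| := by
        have : |c| * |μ| * |ρ y| ≤ L * R := by
          calc |c| * |μ| * |ρ y| ≤ 1 * L * R := by
                exact mul_le_mul (mul_le_mul hc hμ (abs_nonneg _) zero_le_one)
                  (hR y hy) (abs_nonneg _) (by positivity)
            _ = L * R := by ring
        exact mul_le_mul this le_rfl (abs_nonneg _) (by positivity)
      have h3 : L * R * |W y| ≤ K * max |W y| |Q y| :=
        mul_le_mul hK2 (le_max_left _ _) (abs_nonneg _) hKpos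
      rw [h1]; linarith
  have GM : ∀ y ∈ Icc s t, max |W y| |Q y| ≤ M₁ := by
    intro y hy
    refine le_trans (G y hy) ?_
    rw [gronwallBound_ε0, one_mul, hM₁]
    exact Real.exp_le_exp.2 (by nlinarith [hy.1, hy.2])
  refine ⟨GM, ?_⟩
  intro y hy
  have HB := (convex_Icc s t).norm_image_sub_le_of_norm_hasDerivWithin_le
    (f := Q) (f' := fun y => -(c * μ * ρ y * W y)) (C := |c| * (L * R * M₁))
    (fun x hx => (hQ x hx).hasDerivWithinAt)
    (fun x hx => by
      have h1 : ‖-(c * μ * ρ x * W x)‖ = |c| * |μ| * |ρ x| * |W x| := by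
        rw [Real.norm_eq_abs, abs_neg, abs_mul, abs_mul, abs_mul]
      rw [h1]
      have hW1 : |W x| ≤ M₁ := le_trans (le_max_left _ _) (GM x hx)
      have hM₁0 : 0 ≤ M₁ := le_trans (abs_nonneg _) hW1
      calc |c| * |μ| * |ρ x| * |W x| ≤ |c| * L * R * M₁ := by
            exact mul_le_mul (mul_le_mul (mul_le_mul le_rfl hμ (abs_nonneg _)
              (abs_nonneg _)) (hR x hx) (abs_nonneg _) (by positivity)) hW1
              (abs_nonneg _) (by positivity)
        _ = |c| * (L * R * M₁) := by ring)
    (left_mem_Icc.2 hst) hy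
  rw [Real.norm_eq_abs, Real.norm_eq_abs] at HB
  have hM₁0 : 0 ≤ M₁ := by rw [hM₁]; positivity
  calc |Q y - Q s| ≤ |c| * (L * R * M₁) * |y - s| := HB
    _ ≤ |c| * (L * R * M₁) * (t - s) := by
        have : |y - s| = y - s := abs_of_nonneg (by linarith [hy.1])
        rw [this]
        exact mul_le_mul le_rfl (by linarith [hy.2]) (by linarith [hy.1]) (by positivity)

/-- Convergence of the trace `h_ε` of the one-period transfer matrix of the
rescaled high-contrast problem: `h_ε → v₁(h) + p₂(h) − λ₀ v₂(h) ∫_h^1 ρ₁` as `ε → 0`. -/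
theorem transfer_trace_convergence
    (h : ℝ) (hh0 : 0 < h) (hh1 : h < 1)
    (a₀ ρ₀ a₁ ρ₁ : ℝ → ℝ)
    (ha₀c : ContinuousOn a₀ (Icc 0 h)) (ha₀p : ∀ y ∈ Icc (0:ℝ) h, 0 < a₀ y)
    (hρ₀c : ContinuousOn ρ₀ (Icc 0 h)) (hρ₀p : ∀ y ∈ Icc (0:ℝ) h, 0 < ρ₀ y)
    (ha₁c : ContinuousOn a₁ (Icc h 1)) (ha₁p : ∀ y ∈ Icc h (1:ℝ), 0 < a₁ y)
    (hρ₁c : ContinuousOn ρ₁ (Icc h 1)) (hρ₁p : ∀ y ∈ Icc h (1:ℝ), 0 < ρ₁ y)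
    (lam₀ : ℝ) (lam : ℝ → ℝ)
    (hlam : Tendsto lam (nhdsWithin 0 (Ioo 0 1)) (nhds lam₀))
    -- soft fundamental system at `λ_ε`, for each `ε ∈ (0,1)`
    (vε₁ pε₁ vε₂ pε₂ : ℝ → ℝ → ℝ)
    (hvε₁ : ∀ ε ∈ Ioo (0:ℝ) 1, ∀ y ∈ Icc (0:ℝ) h,
      HasDerivAt (vε₁ ε) (pε₁ ε y / a₀ y) y)
    (hpε₁ : ∀ ε ∈ Ioo (0:ℝ) 1, ∀ y ∈ Icc (0:ℝ) h,
      HasDerivAt (pε₁ ε) (-(lam ε * ρ₀ y * vε₁ ε y)) y)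
    (hvε₂ : ∀ ε ∈ Ioo (0:ℝ) 1, ∀ y ∈ Icc (0:ℝ) h,
      HasDerivAt (vε₂ ε) (pε₂ ε y / a₀ y) y)
    (hpε₂ : ∀ ε ∈ Ioo (0:ℝ) 1, ∀ y ∈ Icc (0:ℝ) h,
      HasDerivAt (pε₂ ε) (-(lam ε * ρ₀ y * vε₂ ε y)) y)
    (hicε : ∀ ε ∈ Ioo (0:ℝ) 1,
      vε₁ ε 0 = 1 ∧ pε₁ ε 0 = 0 ∧ vε₂ ε 0 = 0 ∧ pε₂ ε 0 = 1)
    -- stiff fundamental system at `(λ_ε, ε)`, for each `ε ∈ (0,1)`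
    (wε₁ qε₁ wε₂ qε₂ : ℝ → ℝ → ℝ)
    (hwε₁ : ∀ ε ∈ Ioo (0:ℝ) 1, ∀ y ∈ Icc h (1:ℝ),
      HasDerivAt (wε₁ ε) (qε₁ ε y / a₁ y) y)
    (hqε₁ : ∀ ε ∈ Ioo (0:ℝ) 1, ∀ y ∈ Icc h (1:ℝ),
      HasDerivAt (qε₁ ε) (-(ε ^ 2 * lam ε * ρ₁ y * wε₁ ε y)) y)
    (hwε₂ : ∀ ε ∈ Ioo (0:ℝ) 1, ∀ y ∈ Icc h (1:ℝ),
      HasDerivAt (wε₂ ε) (qε₂ ε y / a₁ y) y)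
    (hqε₂ : ∀ ε ∈ Ioo (0:ℝ) 1, ∀ y ∈ Icc h (1:ℝ),
      HasDerivAt (qε₂ ε) (-(ε ^ 2 * lam ε * ρ₁ y * wε₂ ε y)) y)
    (hicw : ∀ ε ∈ Ioo (0:ℝ) 1,
      wε₁ ε h = 1 ∧ qε₁ ε h = 0 ∧ wε₂ ε h = 0 ∧ qε₂ ε h = 1)
    -- soft fundamental system at `λ₀`
    (v₁ p₁ v₂ p₂ : ℝ → ℝ)
    (hv₁ : ∀ y ∈ Icc (0:ℝ) h, HasDerivAt v₁ (p₁ y / a₀ y) y)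
    (hp₁ : ∀ y ∈ Icc (0:ℝ) h, HasDerivAt p₁ (-(lam₀ * ρ₀ y * v₁ y)) y)
    (hv₂ : ∀ y ∈ Icc (0:ℝ) h, HasDerivAt v₂ (p₂ y / a₀ y) y)
    (hp₂ : ∀ y ∈ Icc (0:ℝ) h, HasDerivAt p₂ (-(lam₀ * ρ₀ y * v₂ y)) y)
    (hv₁0 : v₁ 0 = 1) (hp₁0 : p₁ 0 = 0) (hv₂0 : v₂ 0 = 0) (hp₂0 : p₂ 0 = 1) :
    Tendsto
      (fun ε : ℝ =>
        vε₁ ε h * wε₁ ε 1 + ε ^ 2 * pε₁ ε h * wε₂ ε 1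
          + (1 / ε ^ 2) * vε₂ ε h * qε₁ ε 1 + pε₂ ε h * qε₂ ε 1)
      (nhdsWithin 0 (Ioo 0 1))
      (nhds (v₁ h + p₂ h - lam₀ * v₂ h * ∫ y in h..(1:ℝ), ρ₁ y)) := by
  set l := nhdsWithin (0:ℝ) (Ioo 0 1) with hldef
  have hne0h : (Icc (0:ℝ) h).Nonempty := ⟨0, le_rfl, hh0.le⟩
  have hneh1 : (Icc h (1:ℝ)).Nonempty := ⟨h, le_rfl, hh1.le⟩
  have hmemh : h ∈ Icc (0:ℝ) h := ⟨hh0.le, le_rfl⟩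
  have hmem1 : (1:ℝ) ∈ Icc h 1 := ⟨hh1.le, le_rfl⟩
  -- extrema of coefficients
  obtain ⟨ya, hya, hA₀min'⟩ := isCompact_Icc.exists_isMinOn hne0h ha₀c
  set A₀ := a₀ ya with hA₀def
  have hA₀min : ∀ y ∈ Icc (0:ℝ) h, A₀ ≤ a₀ y := fun y hy => isMinOn_iff.mp hA₀min' y hy
  have hA₀pos : 0 < A₀ := ha₀p ya hya
  obtain ⟨yr, hyr, hR₀max'⟩ := isCompact_Icc.exists_isMaxOn hne0h hρ₀c
  set R₀ := ρ₀ yr with hR₀def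
  have hR₀max : ∀ y ∈ Icc (0:ℝ) h, ρ₀ y ≤ R₀ := fun y hy => isMaxOn_iff.mp hR₀max' y hy
  have hR₀pos : 0 < R₀ := hρ₀p yr hyr
  have hρ₀b : ∀ y ∈ Icc (0:ℝ) h, |ρ₀ y| ≤ R₀ := fun y hy => by
    rw [abs_of_pos (hρ₀p y hy)]; exact hR₀max y hy
  obtain ⟨za, hza, hA₁min'⟩ := isCompact_Icc.exists_isMinOn hneh1 ha₁c
  set A₁ := a₁ za with hA₁def
  have hA₁min : ∀ y ∈ Icc h (1:ℝ), A₁ ≤ a₁ y := fun y hy => isMinOn_iff.mp hA₁min' y hy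
  have hA₁pos : 0 < A₁ := ha₁p za hza
  obtain ⟨zr, hzr, hR₁max'⟩ := isCompact_Icc.exists_isMaxOn hneh1 hρ₁c
  set R₁ := ρ₁ zr with hR₁def
  have hR₁max : ∀ y ∈ Icc h (1:ℝ), ρ₁ y ≤ R₁ := fun y hy => isMaxOn_iff.mp hR₁max' y hy
  have hR₁pos : 0 < R₁ := hρ₁p zr hzr
  have hρ₁b : ∀ y ∈ Icc h (1:ℝ), |ρ₁ y| ≤ R₁ := fun y hy => by
    rw [abs_of_pos (hρ₁p y hy)]; exact hR₁max y hy
  set L := |lam₀| + 1 with hLdef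
  have hL0 : (0:ℝ) ≤ L := by positivity
  -- bounds on v₁ v₂
  have hv₁cont : ContinuousOn v₁ (Icc 0 h) :=
    fun y hy => (hv₁ y hy).continuousAt.continuousWithinAt
  have hv₂cont : ContinuousOn v₂ (Icc 0 h) :=
    fun y hy => (hv₂ y hy).continuousAt.continuousWithinAt
  obtain ⟨M₁v, hM₁v⟩ := isCompact_Icc.exists_bound_of_continuousOn hv₁cont
  obtain ⟨M₂v, hM₂v⟩ := isCompact_Icc.exists_bound_of_continuousOn hv₂cont
  set Mv := max M₁v M₂v with hMvdef
  have hv₁b : ∀ y ∈ Icc (0:ℝ) h, |v₁ y| ≤ Mv := fun y hy =>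
    le_trans (by simpa using hM₁v y hy) (le_max_left _ _)
  have hv₂b : ∀ y ∈ Icc (0:ℝ) h, |v₂ y| ≤ Mv := fun y hy =>
    le_trans (by simpa using hM₂v y hy) (le_max_right _ _)
  have hMv0 : (0:ℝ) ≤ Mv := le_trans (abs_nonneg _) (hv₁b 0 ⟨le_rfl, hh0.le⟩)
  set K₀ := max (1/A₀) (L*R₀) + 1 with hK₀def
  set K₁ := max (1/A₁) (L*R₁) + 1 with hK₁def
  have hK₀pos : 0 < K₀ := by
    have h1 : (0:ℝ) < 1/A₀ := by positivity
    have h2 := le_max_left (1/A₀) (L*R₀)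
    rw [hK₀def]; nlinarith
  have hK₁pos : 0 < K₁ := by
    have h1 : (0:ℝ) < 1/A₁ := by positivity
    have h2 := le_max_left (1/A₁) (L*R₁)
    rw [hK₁def]; nlinarith
  set M₁ := Real.exp (K₁ * (1 - h)) with hM₁def
  have hM₁0 : (0:ℝ) ≤ M₁ := by rw [hM₁def]; positivity
  -- eventual facts about lam
  have evmem : ∀ᶠ ε in l, ε ∈ Ioo (0:ℝ) 1 := eventually_mem_nhdsWithin
  have hevd : ∀ᶠ ε in l, |lam ε - lam₀| ≤ 1 := by
    have := Metric.tendsto_nhds.mp hlam 1 one_pos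
    filter_upwards [this] with ε hε
    rw [Real.dist_eq] at hε; linarith
  have hevL : ∀ᶠ ε in l, |lam ε| ≤ L := by
    filter_upwards [hevd] with ε hε
    have h1 := abs_sub_abs_le_abs_sub (lam ε) lam₀
    rw [hLdef]; linarith
  have hid : Tendsto (fun ε : ℝ => ε) l (𝓝 0) :=
    tendsto_id.mono_right nhdsWithin_le_nhds
  have hε2 : Tendsto (fun ε : ℝ => ε^2) l (𝓝 0) := by
    have := hid.mul hid
    simp only [mul_zero] at this
    refine this.congr fun ε => ?_
    ring
  have hdiff0 : Tendsto (fun ε => |lam ε - lam₀|) l (𝓝 0) := by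
    have h1 : Tendsto (fun ε => lam ε - lam₀) l (𝓝 (lam₀ - lam₀)) :=
      hlam.sub_const lam₀
    rw [sub_self] at h1
    simpa using h1.abs
  -- soft convergence helper
  set Cs := (R₀ * Mv) * ((Real.exp (K₀ * h) - 1) / K₀) with hCsdef
  have soft_tend : ∀ (Vε Pε : ℝ → ℝ → ℝ) (V P : ℝ → ℝ),
      (∀ ε ∈ Ioo (0:ℝ) 1, ∀ y ∈ Icc (0:ℝ) h, HasDerivAt (Vε ε) (Pε ε y / a₀ y) y) →
      (∀ ε ∈ Ioo (0:ℝ) 1, ∀ y ∈ Icc (0:ℝ) h,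
        HasDerivAt (Pε ε) (-(lam ε * ρ₀ y * Vε ε y)) y) →
      (∀ y ∈ Icc (0:ℝ) h, HasDerivAt V (P y / a₀ y) y) →
      (∀ y ∈ Icc (0:ℝ) h, HasDerivAt P (-(lam₀ * ρ₀ y * V y)) y) →
      (∀ y ∈ Icc (0:ℝ) h, |V y| ≤ Mv) →
      (∀ ε ∈ Ioo (0:ℝ) 1, Vε ε 0 = V 0 ∧ Pε ε 0 = P 0) →
      Tendsto (fun ε => Vε ε h) l (𝓝 (V h)) ∧
        Tendsto (fun ε => Pε ε h) l (𝓝 (P h)) := by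
    intro Vε Pε V P hVε hPε hV hP hVb hIC
    have key : ∀ᶠ ε in l, max |Vε ε h - V h| |Pε ε h - P h| ≤ |lam ε - lam₀| * Cs := by
      filter_upwards [evmem, hevL] with ε hε hLε
      have HK := soft_key (s := 0) (t := h) hA₀pos hA₀min hρ₀b hVb hMv0 hR₀pos.le
        hLε hK₀def (hVε ε hε) (hPε ε hε) hV hP (hIC ε hε).1 (hIC ε hε).2 h hmemh
      rw [sub_zero, gronwallBound_zero_eta hK₀pos.ne'] at HK
      calc max |Vε ε h - V h| |Pε ε h - P h|
          ≤ |lam ε - lam₀| * (R₀ * Mv) * ((Real.exp (K₀ * h) - 1) / K₀) := HK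
        _ = |lam ε - lam₀| * Cs := by rw [hCsdef]; ring
    have hg0 : Tendsto (fun ε => |lam ε - lam₀| * Cs) l (𝓝 0) := by
      simpa using hdiff0.mul_const Cs
    constructor
    · exact tendsto_of_abs_sub_le
        (key.mono fun ε hk => le_trans (le_max_left _ _) hk) hg0
    · exact tendsto_of_abs_sub_le
        (key.mono fun ε hk => le_trans (le_max_right _ _) hk) hg0
  obtain ⟨S1, S2⟩ := soft_tend vε₁ pε₁ v₁ p₁ hvε₁ hpε₁ hv₁ hp₁ hv₁b
    (fun ε hε => by rw [(hicε ε hε).1, (hicε ε hε).2.1, hv₁0, hp₁0]; exact ⟨rfl, rfl⟩)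
  obtain ⟨S3, S4⟩ := soft_tend vε₂ pε₂ v₂ p₂ hvε₂ hpε₂ hv₂ hp₂ hv₂b
    (fun ε hε => by rw [(hicε ε hε).2.2.1, (hicε ε hε).2.2.2, hv₂0, hp₂0]; exact ⟨rfl, rfl⟩)
  -- stiff eventual bounds
  have hc2 : ∀ ε ∈ Ioo (0:ℝ) 1, |ε^2| ≤ 1 := fun ε hε => by
    rw [abs_of_nonneg (sq_nonneg ε)]; nlinarith [hε.1, hε.2]
  have stiff₁ : ∀ᶠ ε in l, (∀ y ∈ Icc h (1:ℝ), max |wε₁ ε y| |qε₁ ε y| ≤ M₁) ∧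
      (∀ y ∈ Icc h (1:ℝ), |qε₁ ε y| ≤ ε^2 * (L * R₁ * M₁) * (1 - h)) := by
    filter_upwards [evmem, hevL] with ε hε hLε
    have HK := stiff_key (s := h) (t := 1) hh1.le hA₁pos hA₁min hρ₁b hR₁pos.le
      hLε hL0 (hc2 ε hε) hK₁def hM₁def (hwε₁ ε hε) (hqε₁ ε hε)
      (by rw [(hicw ε hε).1, (hicw ε hε).2.1]; simp)
    refine ⟨HK.1, fun y hy => ?_⟩
    have h2 := HK.2 y hy
    rwa [(hicw ε hε).2.1, sub_zero, abs_of_nonneg (sq_nonneg ε)] at h2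
  have stiff₂ : ∀ᶠ ε in l, (∀ y ∈ Icc h (1:ℝ), max |wε₂ ε y| |qε₂ ε y| ≤ M₁) ∧
      (∀ y ∈ Icc h (1:ℝ), |qε₂ ε y - 1| ≤ ε^2 * (L * R₁ * M₁) * (1 - h)) := by
    filter_upwards [evmem, hevL] with ε hε hLε
    have HK := stiff_key (s := h) (t := 1) hh1.le hA₁pos hA₁min hρ₁b hR₁pos.le
      hLε hL0 (hc2 ε hε) hK₁def hM₁def (hwε₂ ε hε) (hqε₂ ε hε)
      (by rw [(hicw ε hε).2.2.1, (hicw ε hε).2.2.2]; simp)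
    refine ⟨HK.1, fun y hy => ?_⟩
    have h2 := HK.2 y hy
    rwa [(hicw ε hε).2.2.2, abs_of_nonneg (sq_nonneg ε)] at h2
  -- uniform closeness of wε₁ to 1
  set C₂ := (L * R₁ * M₁) * (1 - h) / A₁ * (1 - h) with hC₂def
  have wkey : ∀ᶠ ε in l, ∀ y ∈ Icc h (1:ℝ), |wε₁ ε y - 1| ≤ ε^2 * C₂ := by
    filter_upwards [evmem, stiff₁] with ε hε hst
    intro y hy
    have HB := (convex_Icc h 1).norm_image_sub_le_of_norm_hasDerivWithin_le
      (f := wε₁ ε) (f' := fun y => qε₁ ε y / a₁ y)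
      (C := ε^2 * (L * R₁ * M₁) * (1 - h) / A₁)
      (fun x hx => (hwε₁ ε hε x hx).hasDerivWithinAt)
      (fun x hx => by
        have hax : 0 < a₁ x := ha₁p x hx
        rw [Real.norm_eq_abs, abs_div, abs_of_pos hax]
        calc |qε₁ ε x| / a₁ x ≤ |qε₁ ε x| / A₁ :=
              div_le_div_of_nonneg_left (abs_nonneg _) hA₁pos (hA₁min x hx)
          _ ≤ ε^2 * (L * R₁ * M₁) * (1 - h) / A₁ := by
              have := hst.2 x hx
              gcongr)
      ⟨le_rfl, hh1.le⟩ hy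

    rw [(hicw ε hε).1, Real.norm_eq_abs, Real.norm_eq_abs] at HB
    have hy' : |y - h| ≤ 1 - h := by
      rw [abs_of_nonneg (by linarith [hy.1])]; linarith [hy.2]
    have hCnn : (0:ℝ) ≤ ε^2 * (L * R₁ * M₁) * (1 - h) / A₁ :=
      div_nonneg (mul_nonneg (mul_nonneg (sq_nonneg ε)
        (mul_nonneg (mul_nonneg hL0 hR₁pos.le) hM₁0)) (by linarith)) hA₁pos.le
    calc |wε₁ ε y - 1| ≤ ε^2 * (L * R₁ * M₁) * (1 - h) / A₁ * |y - h| := HB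
      _ ≤ ε^2 * (L * R₁ * M₁) * (1 - h) / A₁ * (1 - h) :=
          mul_le_mul_of_nonneg_left hy' hCnn
      _ = ε^2 * C₂ := by rw [hC₂def]; ring
  -- T2 : wε₁ ε 1 → 1
  have T2 : Tendsto (fun ε => wε₁ ε 1) l (𝓝 1) := by
    apply tendsto_of_abs_sub_le (g := fun ε => ε^2 * C₂)
    · filter_upwards [wkey] with ε hw
      exact hw 1 hmem1
    · simpa using hε2.mul_const C₂
  -- T7 : qε₂ ε 1 → 1
  have T7 : Tendsto (fun ε => qε₂ ε 1) l (𝓝 1) := by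
    apply tendsto_of_abs_sub_le (g := fun ε => ε^2 * ((L * R₁ * M₁) * (1 - h)))
    · filter_upwards [stiff₂] with ε hs
      calc |qε₂ ε 1 - 1| ≤ ε^2 * (L * R₁ * M₁) * (1 - h) := hs.2 1 hmem1
        _ = ε^2 * ((L * R₁ * M₁) * (1 - h)) := by ring
    · simpa using hε2.mul_const ((L * R₁ * M₁) * (1 - h))
  -- T3 : middle term → 0
  have T3 : Tendsto (fun ε => ε^2 * pε₁ ε h * wε₂ ε 1) l (𝓝 0) := by
    have h1 : Tendsto (fun ε => ε^2 * pε₁ ε h) l (𝓝 0) := by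
      have := hε2.mul S2; simpa using this
    have hg : Tendsto (fun ε => |ε^2 * pε₁ ε h| * M₁) l (𝓝 0) := by
      have h2 : Tendsto (fun ε => |ε^2 * pε₁ ε h|) l (𝓝 0) := by
        have := h1.abs; simpa using this
      simpa using h2.mul_const M₁
    apply squeeze_zero_norm' ?_ hg
    filter_upwards [stiff₂] with ε hs
    rw [Real.norm_eq_abs, abs_mul]
    have hb : |wε₂ ε 1| ≤ M₁ := le_trans (le_max_left _ _) (hs.1 1 hmem1)
    exact mul_le_mul_of_nonneg_left hb (abs_nonneg _)
  -- T4 : the singular term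
  set I := ∫ y in h..(1:ℝ), ρ₁ y with hIdef
  have hwcont : ∀ ε ∈ Ioo (0:ℝ) 1, ContinuousOn (wε₁ ε) (Icc h 1) :=
    fun ε hε y hy => (hwε₁ ε hε y hy).continuousAt.continuousWithinAt
  have hρ₁u : ContinuousOn ρ₁ (uIcc h 1) := by rw [uIcc_of_le hh1.le]; exact hρ₁c
  have hintρ : IntervalIntegrable ρ₁ MeasureTheory.volume h 1 := hρ₁u.intervalIntegrable
  have key4 : ∀ᶠ ε in l, (1/ε^2) * vε₂ ε h * qε₁ ε 1
      = vε₂ ε h * (-(lam ε) * ∫ y in h..(1:ℝ), ρ₁ y * wε₁ ε y) := by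
    filter_upwards [evmem] with ε hε
    have hcont : ContinuousOn (fun y => ρ₁ y * wε₁ ε y) (uIcc h 1) := by
      rw [uIcc_of_le hh1.le]
      exact hρ₁c.mul (hwcont ε hε)
    have hint : IntervalIntegrable (fun y => ρ₁ y * wε₁ ε y) MeasureTheory.volume h 1 :=
      hcont.intervalIntegrable
    have hFTC : ∫ y in h..(1:ℝ), -(ε^2 * lam ε) * (ρ₁ y * wε₁ ε y)
        = qε₁ ε 1 - qε₁ ε h :=
      intervalIntegral.integral_eq_sub_of_hasDerivAt
        (fun y hy => by
          have := hqε₁ ε hε y (by rwa [uIcc_of_le hh1.le] at hy)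
          exact this.congr_deriv (by ring))
        (hint.const_mul _)
    rw [intervalIntegral.integral_const_mul, (hicw ε hε).2.1, sub_zero] at hFTC
    rw [← hFTC]
    have hε0 : (ε:ℝ) ≠ 0 := ne_of_gt hε.1
    field_simp
  have TJ : Tendsto (fun ε => ∫ y in h..(1:ℝ), ρ₁ y * wε₁ ε y) l (𝓝 I) := by
    apply tendsto_of_abs_sub_le (g := fun ε => R₁ * (ε^2 * C₂) * |1 - h|)
    · filter_upwards [evmem, wkey] with ε hε hw
      have hcont : ContinuousOn (fun y => ρ₁ y * wε₁ ε y) (uIcc h 1) := by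
        rw [uIcc_of_le hh1.le]
        exact hρ₁c.mul (hwcont ε hε)
      have hint : IntervalIntegrable (fun y => ρ₁ y * wε₁ ε y) MeasureTheory.volume h 1 :=
        hcont.intervalIntegrable
      have hsub : (∫ y in h..(1:ℝ), ρ₁ y * wε₁ ε y) - I
          = ∫ y in h..(1:ℝ), (ρ₁ y * wε₁ ε y - ρ₁ y) := by
        rw [hIdef, ← intervalIntegral.integral_sub hint hintρ]
      rw [hsub, ← Real.norm_eq_abs]
      apply intervalIntegral.norm_integral_le_of_norm_le_const
      intro x hx
      have hx' : x ∈ Icc h 1 := Ioc_subset_Icc_self (by rwa [uIoc_of_le hh1.le] at hx)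
      rw [Real.norm_eq_abs]
      have he : ρ₁ x * wε₁ ε x - ρ₁ x = ρ₁ x * (wε₁ ε x - 1) := by ring
      rw [he, abs_mul]
      exact mul_le_mul (hρ₁b x hx') (hw x hx') (abs_nonneg _) hR₁pos.le
    · have h1 : Tendsto (fun ε => ε^2 * C₂) l (𝓝 0) := by simpa using hε2.mul_const C₂
      have := (h1.const_mul R₁).mul_const |1 - h|
      simpa using this
  have T4' : Tendsto (fun ε => vε₂ ε h * (-(lam ε) * ∫ y in h..(1:ℝ), ρ₁ y * wε₁ ε y)) l
      (𝓝 (v₂ h * (-lam₀ * I))) := S3.mul (hlam.neg.mul TJ)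
  have T4 : Tendsto (fun ε => (1/ε^2) * vε₂ ε h * qε₁ ε 1) l (𝓝 (v₂ h * (-lam₀ * I))) :=
    T4'.congr' (EventuallyEq.symm (key4 : (fun ε => (1/ε^2) * vε₂ ε h * qε₁ ε 1) =ᶠ[l] _))
  have final := (((S1.mul T2).add T3).add T4).add (S4.mul T7)
  have hval : v₁ h * 1 + 0 + v₂ h * (-lam₀ * I) + p₂ h * 1
      = v₁ h + p₂ h - lam₀ * v₂ h * I := by ring
  rw [hval] at final
  exact final
end

section
/- Let λ_ε ∈ ℝ for ε ∈ (0,1) with λ_ε → λ₀ as ε → 0, and for each ε let (w₁^ε,q₁^ε) be the first member of the stiff fundamental system at (λ_ε,ε). Then ε^{−2}·q₁^ε(1) → −λ₀·∫_h^1 ρ₁(y) dy as ε → 0. -/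
open Set Filter Topology

/-- The rescaled co-derivative of the first stiff fundamental solution
satisfies `ε⁻² q₁^ε(1) → −λ₀ ∫_h^1 ρ₁` as `ε → 0`. -/
theorem stiff_coderivative_limit
    (h : ℝ) (hh0 : 0 < h) (hh1 : h < 1)
    (a₁ ρ₁ : ℝ → ℝ)
    (ha₁c : ContinuousOn a₁ (Icc h 1)) (ha₁p : ∀ y ∈ Icc h (1:ℝ), 0 < a₁ y)
    (hρ₁c : ContinuousOn ρ₁ (Icc h 1)) (hρ₁p : ∀ y ∈ Icc h (1:ℝ), 0 < ρ₁ y)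
    (lam₀ : ℝ) (lam : ℝ → ℝ)
    (hlam : Tendsto lam (nhdsWithin 0 (Ioo 0 1)) (nhds lam₀))
    (wε₁ qε₁ wε₂ qε₂ : ℝ → ℝ → ℝ)
    (hwε₁ : ∀ ε ∈ Ioo (0:ℝ) 1, ∀ y ∈ Icc h (1:ℝ),
      HasDerivAt (wε₁ ε) (qε₁ ε y / a₁ y) y)
    (hqε₁ : ∀ ε ∈ Ioo (0:ℝ) 1, ∀ y ∈ Icc h (1:ℝ),
      HasDerivAt (qε₁ ε) (-(ε ^ 2 * lam ε * ρ₁ y * wε₁ ε y)) y)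
    (hwε₂ : ∀ ε ∈ Ioo (0:ℝ) 1, ∀ y ∈ Icc h (1:ℝ),
      HasDerivAt (wε₂ ε) (qε₂ ε y / a₁ y) y)
    (hqε₂ : ∀ ε ∈ Ioo (0:ℝ) 1, ∀ y ∈ Icc h (1:ℝ),
      HasDerivAt (qε₂ ε) (-(ε ^ 2 * lam ε * ρ₁ y * wε₂ ε y)) y)
    (hicw : ∀ ε ∈ Ioo (0:ℝ) 1,
      wε₁ ε h = 1 ∧ qε₁ ε h = 0 ∧ wε₂ ε h = 0 ∧ qε₂ ε h = 1) :
    Tendsto (fun ε : ℝ => (1 / ε ^ 2) * qε₁ ε 1)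
      (nhdsWithin 0 (Ioo 0 1))
      (nhds (-lam₀ * ∫ y in h..(1:ℝ), ρ₁ y)) := by
  have hh01 : h ≤ 1 := hh1.le
  have hmem_h : h ∈ Icc h (1:ℝ) := left_mem_Icc.2 hh01
  -- constants
  obtain ⟨ya, hya, hma⟩ := isCompact_Icc.exists_isMinOn ⟨h, hmem_h⟩ ha₁c
  obtain ⟨yr, hyr, hMr⟩ := isCompact_Icc.exists_isMaxOn ⟨h, hmem_h⟩ hρ₁c
  set ma := a₁ ya with hma_def
  set Mr := ρ₁ yr with hMr_def
  have hma_pos : 0 < ma := ha₁p ya hya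
  have hMr_pos : 0 < Mr := hρ₁p yr hyr
  have hma_le : ∀ y ∈ Icc h (1:ℝ), ma ≤ a₁ y := fun y hy => hma hy
  have hMr_ge : ∀ y ∈ Icc h (1:ℝ), ρ₁ y ≤ Mr := fun y hy => hMr hy
  set L : ℝ := |lam₀| + 1 with hL_def
  have hL_pos : 0 < L := by positivity
  set K : ℝ := max (1 / ma) (L * Mr) with hK_def
  have hK_pos : 0 < K := lt_of_lt_of_le (by positivity) (le_max_left _ _)
  set B : ℝ := Real.exp (K * (1 - h)) with hB_def
  have hB_pos : 0 < B := Real.exp_pos _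
  -- eventual bound on lam
  have hlamE : ∀ᶠ ε in nhdsWithin 0 (Ioo 0 1), |lam ε| ≤ L := by
    filter_upwards [hlam (Metric.ball_mem_nhds lam₀ one_pos)] with ε hε
    have h1 : |lam ε - lam₀| < 1 := by simpa [Real.dist_eq] using hε
    have h2 : |lam ε| - |lam₀| ≤ |lam ε - lam₀| := abs_sub_abs_le_abs_sub _ _
    rw [hL_def]; linarith
  -- Main per-ε identity
  have key : ∀ ε ∈ Ioo (0:ℝ) 1,
      (1 / ε ^ 2) * qε₁ ε 1 = -lam ε * ∫ y in h..(1:ℝ), ρ₁ y * wε₁ ε y := by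
    intro ε hε
    obtain ⟨hw0, hq0, -, -⟩ := hicw ε hε
    have hwc : ContinuousOn (wε₁ ε) (Icc h 1) := fun y hy =>
      (hwε₁ ε hε y hy).continuousAt.continuousWithinAt
    have hint : IntervalIntegrable (fun y => -(ε ^ 2 * lam ε * ρ₁ y * wε₁ ε y))
        MeasureTheory.volume h 1 := by
      apply ContinuousOn.intervalIntegrable
      rw [uIcc_of_le hh01]
      exact ((continuousOn_const.mul hρ₁c).mul hwc).neg
    have hFTC : ∫ y in h..(1:ℝ), -(ε ^ 2 * lam ε * ρ₁ y * wε₁ ε y)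
        = qε₁ ε 1 - qε₁ ε h := by
      apply intervalIntegral.integral_eq_sub_of_hasDerivAt
      · intro y hy
        exact hqε₁ ε hε y (by rwa [uIcc_of_le hh01] at hy)
      · exact hint
    have hεne : (ε : ℝ) ≠ 0 := ne_of_gt hε.1
    have hrw : (fun y => -(ε ^ 2 * lam ε * ρ₁ y * wε₁ ε y))
        = fun y => (-(ε ^ 2 * lam ε)) * (ρ₁ y * wε₁ ε y) := by
      funext y; ring
    have hq1 : qε₁ ε 1 = (-(ε ^ 2 * lam ε)) * ∫ y in h..(1:ℝ), ρ₁ y * wε₁ ε y := by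
      rw [← intervalIntegral.integral_const_mul, ← hrw, hFTC, hq0, sub_zero]
    rw [hq1]
    field_simp
  -- Gronwall bound and error estimate
  set C : ℝ := Mr * (L * Mr * B * (1 - h) ^ 2 / ma) * (1 - h) with hC_def
  have errbound : ∀ ε ∈ Ioo (0:ℝ) 1, |lam ε| ≤ L →
      |(∫ y in h..(1:ℝ), ρ₁ y * wε₁ ε y) - ∫ y in h..(1:ℝ), ρ₁ y| ≤ C * ε ^ 2 := by
    intro ε hε hlε
    obtain ⟨hw0, hq0, -, -⟩ := hicw ε hε
    have hwc : ContinuousOn (wε₁ ε) (Icc h 1) := fun y hy =>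
      (hwε₁ ε hε y hy).continuousAt.continuousWithinAt
    have hqc : ContinuousOn (qε₁ ε) (Icc h 1) := fun y hy =>
      (hqε₁ ε hε y hy).continuousAt.continuousWithinAt
    -- Gronwall
    set f : ℝ → ℝ × ℝ := fun y => (wε₁ ε y, qε₁ ε y) with hf_def
    have hfG : ∀ y ∈ Icc h (1:ℝ), ‖f y‖ ≤ B := by
      have hcont : ContinuousOn f (Icc h 1) := hwc.prodMk hqc
      have hderiv : ∀ x ∈ Ico h (1:ℝ), HasDerivWithinAt f
          ((fun y => (qε₁ ε y / a₁ y, -(ε ^ 2 * lam ε * ρ₁ y * wε₁ ε y))) x) (Ici x) x := by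
        intro x hx
        exact ((hwε₁ ε hε x (Ico_subset_Icc_self hx)).prodMk
          (hqε₁ ε hε x (Ico_subset_Icc_self hx))).hasDerivWithinAt
      have hfa : ‖f h‖ ≤ 1 := by
        simp [hf_def, hw0, hq0, Prod.norm_def]
      have hbound : ∀ x ∈ Ico h (1:ℝ), ‖(fun y =>
          (qε₁ ε y / a₁ y, -(ε ^ 2 * lam ε * ρ₁ y * wε₁ ε y))) x‖ ≤ K * ‖f x‖ + 0 := by
        intro x hx
        rw [add_zero]
        have hx' : x ∈ Icc h (1:ℝ) := Ico_subset_Icc_self hx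
        have hax : 0 < a₁ x := ha₁p x hx'
        have hq_le : |qε₁ ε x| ≤ ‖f x‖ := by
          simp [hf_def, Prod.norm_def, Real.norm_eq_abs]
        have hw_le : |wε₁ ε x| ≤ ‖f x‖ := by
          simp [hf_def, Prod.norm_def, Real.norm_eq_abs]
        have h1 : |qε₁ ε x / a₁ x| ≤ K * ‖f x‖ := by
          rw [abs_div]
          have hda : |qε₁ ε x| / |a₁ x| ≤ |qε₁ ε x| / ma := by
            apply div_le_div_of_nonneg_left (abs_nonneg _) hma_pos
            rw [abs_of_pos hax]; exact hma_le x hx'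
          refine hda.trans ?_
          calc |qε₁ ε x| / ma = (1 / ma) * |qε₁ ε x| := by ring
            _ ≤ K * ‖f x‖ := mul_le_mul (le_max_left _ _) hq_le (abs_nonneg _) hK_pos.le
        have h2 : |(-(ε ^ 2 * lam ε * ρ₁ x * wε₁ ε x))| ≤ K * ‖f x‖ := by
          rw [abs_neg]
          have hε2 : |ε ^ 2| ≤ 1 := by
            rw [abs_of_nonneg (sq_nonneg ε)]
            nlinarith [hε.1, hε.2]
          have hρx : |ρ₁ x| ≤ Mr := by
            rw [abs_of_pos (hρ₁p x hx')]; exact hMr_ge x hx'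
          have t1 : |ε ^ 2| * |lam ε| ≤ 1 * L := mul_le_mul hε2 hlε (abs_nonneg _) zero_le_one
          have t2 : |ε ^ 2| * |lam ε| * |ρ₁ x| ≤ 1 * L * Mr :=
            mul_le_mul t1 hρx (abs_nonneg _) (by positivity)
          have t3 : |ε ^ 2| * |lam ε| * |ρ₁ x| * |wε₁ ε x| ≤ 1 * L * Mr * ‖f x‖ :=
            mul_le_mul t2 hw_le (abs_nonneg _) (by positivity)
          calc |ε ^ 2 * lam ε * ρ₁ x * wε₁ ε x|
              = |ε ^ 2| * |lam ε| * |ρ₁ x| * |wε₁ ε x| := by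
                rw [abs_mul, abs_mul, abs_mul]
            _ ≤ 1 * L * Mr * ‖f x‖ := t3
            _ = (L * Mr) * ‖f x‖ := by ring
            _ ≤ K * ‖f x‖ :=
                mul_le_mul_of_nonneg_right (le_max_right _ _) (norm_nonneg _)
        rw [Prod.norm_def]
        simp only [Real.norm_eq_abs]
        exact max_le h1 h2
      intro y hy
      have hGb := norm_le_gronwallBound_of_norm_deriv_right_le hcont hderiv hfa hbound y hy
      rw [gronwallBound_ε0, one_mul] at hGb
      refine hGb.trans ?_
      rw [hB_def]
      exact Real.exp_le_exp.2 (by nlinarith [hy.1, hy.2, hK_pos])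
    have hwB : ∀ y ∈ Icc h (1:ℝ), |wε₁ ε y| ≤ B := by
      intro y hy
      refine le_trans ?_ (hfG y hy)
      simp [hf_def, Prod.norm_def, Real.norm_eq_abs]
    -- bound on q
    have hqB : ∀ t ∈ Icc h (1:ℝ), |qε₁ ε t| ≤ ε ^ 2 * (L * Mr * B) * (1 - h) := by
      intro t ht
      have hint : IntervalIntegrable (fun y => -(ε ^ 2 * lam ε * ρ₁ y * wε₁ ε y))
          MeasureTheory.volume h t := by
        apply ContinuousOn.intervalIntegrable
        rw [uIcc_of_le ht.1]
        exact (((continuousOn_const.mul hρ₁c).mul hwc).neg).mono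
          (Icc_subset_Icc le_rfl ht.2)
      have hFTC : ∫ y in h..t, -(ε ^ 2 * lam ε * ρ₁ y * wε₁ ε y)
          = qε₁ ε t - qε₁ ε h := by
        apply intervalIntegral.integral_eq_sub_of_hasDerivAt
        · intro y hy
          rw [uIcc_of_le ht.1] at hy
          exact hqε₁ ε hε y ⟨hy.1, hy.2.trans ht.2⟩
        · exact hint
      have hnorm : ‖∫ y in h..t, -(ε ^ 2 * lam ε * ρ₁ y * wε₁ ε y)‖
          ≤ ε ^ 2 * (L * Mr * B) * |t - h| := by
        apply intervalIntegral.norm_integral_le_of_norm_le_const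
        intro x hx
        rw [uIoc_of_le ht.1] at hx
        have hx' : x ∈ Icc h (1:ℝ) := ⟨hx.1.le, hx.2.trans ht.2⟩
        simp only [Real.norm_eq_abs, abs_neg]
        have hρx : |ρ₁ x| ≤ Mr := by
          rw [abs_of_pos (hρ₁p x hx')]; exact hMr_ge x hx'
        have t1 : |ε ^ 2| * |lam ε| ≤ ε ^ 2 * L := by
          rw [abs_of_nonneg (sq_nonneg ε)]
          exact mul_le_mul_of_nonneg_left hlε (sq_nonneg ε)
        have t2 : |ε ^ 2| * |lam ε| * |ρ₁ x| ≤ ε ^ 2 * L * Mr :=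
          mul_le_mul t1 hρx (abs_nonneg _) (by positivity)
        have t3 : |ε ^ 2| * |lam ε| * |ρ₁ x| * |wε₁ ε x| ≤ ε ^ 2 * L * Mr * B :=
          mul_le_mul t2 (hwB x hx') (abs_nonneg _) (by positivity)
        calc |ε ^ 2 * lam ε * ρ₁ x * wε₁ ε x|
            = |ε ^ 2| * |lam ε| * |ρ₁ x| * |wε₁ ε x| := by
              rw [abs_mul, abs_mul, abs_mul]
          _ ≤ ε ^ 2 * L * Mr * B := t3
          _ = ε ^ 2 * (L * Mr * B) := by ring
      rw [hFTC, hq0, sub_zero] at hnorm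
      refine le_trans (by simpa using hnorm) ?_
      have habs : |t - h| ≤ 1 - h := by
        rw [abs_of_nonneg (by linarith [ht.1])]
        linarith [ht.2]
      exact mul_le_mul_of_nonneg_left habs
        (mul_nonneg (sq_nonneg ε) (by positivity))
    -- bound on w - 1
    have hwB1 : ∀ y ∈ Icc h (1:ℝ), |wε₁ ε y - 1| ≤ L * Mr * B * (1 - h) ^ 2 / ma * ε ^ 2 := by
      intro y hy
      have hint : IntervalIntegrable (fun t => qε₁ ε t / a₁ t) MeasureTheory.volume h y := by
        apply ContinuousOn.intervalIntegrable
        rw [uIcc_of_le hy.1]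
        exact (hqc.div ha₁c fun t ht => ne_of_gt (ha₁p t ht)).mono
          (Icc_subset_Icc le_rfl hy.2)
      have hFTC : ∫ t in h..y, qε₁ ε t / a₁ t = wε₁ ε y - wε₁ ε h := by
        apply intervalIntegral.integral_eq_sub_of_hasDerivAt
        · intro t ht
          rw [uIcc_of_le hy.1] at ht
          exact hwε₁ ε hε t ⟨ht.1, ht.2.trans hy.2⟩
        · exact hint
      have hnorm : ‖∫ t in h..y, qε₁ ε t / a₁ t‖
          ≤ ε ^ 2 * (L * Mr * B) * (1 - h) / ma * |y - h| := by
        apply intervalIntegral.norm_integral_le_of_norm_le_const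
        intro x hx
        rw [uIoc_of_le hy.1] at hx
        have hx' : x ∈ Icc h (1:ℝ) := ⟨hx.1.le, hx.2.trans hy.2⟩
        rw [Real.norm_eq_abs, abs_div]
        have hax : 0 < a₁ x := ha₁p x hx'
        have hnum : (0:ℝ) ≤ ε ^ 2 * (L * Mr * B) * (1 - h) :=
          mul_nonneg (mul_nonneg (sq_nonneg ε) (by positivity)) (by linarith)
        exact div_le_div₀ hnum (hqB x hx') hma_pos
          (by rw [abs_of_pos hax]; exact hma_le x hx')
      rw [hFTC, hw0] at hnorm
      refine le_trans (by simpa using hnorm) ?_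
      have habs : |y - h| ≤ 1 - h := by
        rw [abs_of_nonneg (by linarith [hy.1])]
        linarith [hy.2]
      have hco : (0:ℝ) ≤ ε ^ 2 * (L * Mr * B) * (1 - h) / ma :=
        div_nonneg (mul_nonneg (mul_nonneg (sq_nonneg ε) (by positivity)) (by linarith))
          hma_pos.le
      calc ε ^ 2 * (L * Mr * B) * (1 - h) / ma * |y - h|
          ≤ ε ^ 2 * (L * Mr * B) * (1 - h) / ma * (1 - h) :=
            mul_le_mul_of_nonneg_left habs hco
        _ = L * Mr * B * (1 - h) ^ 2 / ma * ε ^ 2 := by ring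
    -- combine
    have hintρ : IntervalIntegrable ρ₁ MeasureTheory.volume h 1 :=
      (hρ₁c.mono (by rw [uIcc_of_le hh01])).intervalIntegrable
    have hintρw : IntervalIntegrable (fun y => ρ₁ y * wε₁ ε y) MeasureTheory.volume h 1 := by
      apply ContinuousOn.intervalIntegrable
      rw [uIcc_of_le hh01]
      exact hρ₁c.mul hwc
    rw [← intervalIntegral.integral_sub hintρw hintρ]
    have hnorm : ‖∫ y in h..(1:ℝ), (ρ₁ y * wε₁ ε y - ρ₁ y)‖
        ≤ Mr * (L * Mr * B * (1 - h) ^ 2 / ma * ε ^ 2) * |1 - h| := by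
      apply intervalIntegral.norm_integral_le_of_norm_le_const
      intro x hx
      rw [uIoc_of_le hh01] at hx
      have hx' : x ∈ Icc h (1:ℝ) := ⟨hx.1.le, hx.2⟩
      rw [Real.norm_eq_abs]
      have hρx : |ρ₁ x| ≤ Mr := by
        rw [abs_of_pos (hρ₁p x hx')]; exact hMr_ge x hx'
      calc |ρ₁ x * wε₁ ε x - ρ₁ x| = |ρ₁ x| * |wε₁ ε x - 1| := by
            rw [← abs_mul, mul_sub, mul_one]
        _ ≤ Mr * (L * Mr * B * (1 - h) ^ 2 / ma * ε ^ 2) :=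
            mul_le_mul hρx (hwB1 x hx') (abs_nonneg _) hMr_pos.le
    rw [abs_of_nonneg (by linarith : (0:ℝ) ≤ 1 - h)] at hnorm
    refine le_trans (by simpa [Real.norm_eq_abs] using hnorm) ?_
    exact le_of_eq (by rw [hC_def]; ring)
  -- convergence of the integral
  set I : ℝ := ∫ y in h..(1:ℝ), ρ₁ y with hI_def
  have hgI : Tendsto (fun ε => ∫ y in h..(1:ℝ), ρ₁ y * wε₁ ε y)
      (nhdsWithin 0 (Ioo 0 1)) (nhds I) := by
    rw [tendsto_iff_dist_tendsto_zero]
    apply squeeze_zero' (g := fun ε : ℝ => C * ε ^ 2) (Eventually.of_forall fun ε => dist_nonneg)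
    · filter_upwards [hlamE, eventually_mem_nhdsWithin] with ε hlε hεI
      rw [Real.dist_eq]
      exact errbound ε hεI hlε
    · have hC0 : Tendsto (fun ε : ℝ => C * ε ^ 2) (nhds 0) (nhds 0) := by
        have hp : Tendsto (fun ε : ℝ => ε ^ 2) (nhds 0) (nhds 0) := by
          simpa using (continuous_pow 2).tendsto (0:ℝ)
        simpa using hp.const_mul C
      exact hC0.mono_left nhdsWithin_le_nhds
  have hfinal : Tendsto (fun ε => -lam ε * ∫ y in h..(1:ℝ), ρ₁ y * wε₁ ε y)
      (nhdsWithin 0 (Ioo 0 1)) (nhds (-lam₀ * I)) :=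
    (hlam.neg).mul hgI
  refine hfinal.congr' ?_
  filter_upwards [eventually_mem_nhdsWithin] with ε hεI
  exact (key ε hεI).symm
end

section
/- There exists a constant C > 0, depending only on h, a₀, a₁, ρ₀, ρ₁, such that for every θ ∈ ℝ and every continuously differentiable u : [0,1] → ℂ with u(1) = e^{iθ}·u(0), there exists a continuous function v : [0,1] → ℂ which is continuously differentiable on [0,h], constant on [h,1], and satisfies v(h) = e^{iθ}·v(0), such that ∫_0^h a₀·|u′ − v′|² + ∫_h^1 a₁·|u′|² + ∫_0^1 ρ·|u − v|² ≤ C²·∫_h^1 a₁·|u′|². -/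
open Set MeasureTheory intervalIntegral Asymptotics

private lemma clamp_deriv {F : Type*} [NormedAddCommGroup F] [NormedSpace ℝ F]
    {w : ℝ → F} {p : ℝ} (hw : HasDerivAt w 0 p) (m : ℝ → ℝ)
    (hm : Continuous m) (hmp : m p = p) (hb : ∀ y, |m y - p| ≤ |y - p|) :
    HasDerivAt (fun y => w (m y)) 0 p := by
  rw [hasDerivAt_iff_isLittleO] at hw ⊢
  simp only [smul_zero, sub_zero] at hw ⊢
  have h1 : Filter.Tendsto m (nhds p) (nhds p) := by
    simpa [hmp] using hm.tendsto p
  have h2 := hw.comp_tendsto h1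
  have h3 : (fun y => m y - p) =O[nhds p] (fun y => y - p) := by
    refine IsBigO.of_bound' (Filter.Eventually.of_forall (fun y => ?_))
    simpa [Real.norm_eq_abs] using hb y
  simp only [hmp]
  exact h2.trans_isBigO h3

private lemma norm_sub_sq_le₂ (x y : ℂ) : ‖x - y‖ ^ 2 ≤ 2 * ‖x‖ ^ 2 + 2 * ‖y‖ ^ 2 := by
  have h1 := norm_sub_le x y
  nlinarith [norm_nonneg x, norm_nonneg y, norm_nonneg (x - y), sq_nonneg (‖x‖ - ‖y‖)]

private lemma cs_ineq (a b : ℝ) (hab : a < b) (g : ℝ → ℝ)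
    (hg : ContinuousOn g (Icc a b)) :
    (∫ y in a..b, g y) ^ 2 ≤ (b - a) * ∫ y in a..b, g y ^ 2 := by
  have huicc : uIcc a b = Icc a b := uIcc_of_le hab.le
  have hgi : IntervalIntegrable g volume a b :=
    (huicc ▸ hg).intervalIntegrable
  have hg2i : IntervalIntegrable (fun y => g y ^ 2) volume a b :=
    (huicc ▸ (hg.pow 2)).intervalIntegrable
  set A := ∫ y in a..b, g y with hA
  set B := ∫ y in a..b, g y ^ 2 with hB
  set L := b - a with hL
  have hLpos : 0 < L := by simp only [hL]; linarith
  have key : (∫ y in a..b, (g y - A / L) ^ 2) = B - 2 * (A / L) * A + (A / L) ^ 2 * L := by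
    have expand : (fun y => (g y - A / L) ^ 2)
        = fun y => (g y ^ 2 - (2 * (A / L)) * g y) + (A / L) ^ 2 := by
      funext y; ring
    rw [expand, integral_add (hg2i.sub (hgi.const_mul _)) intervalIntegrable_const,
      integral_sub hg2i (hgi.const_mul _), intervalIntegral.integral_const_mul,
      intervalIntegral.integral_const, smul_eq_mul]
    ring
  have h0 : 0 ≤ ∫ y in a..b, (g y - A / L) ^ 2 :=
    intervalIntegral.integral_nonneg hab.le (fun y _ => sq_nonneg _)
  rw [key] at h0
  have hLne : L ≠ 0 := ne_of_gt hLpos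
  have : 0 ≤ B - A ^ 2 / L := by
    have : 2 * (A / L) * A - (A / L) ^ 2 * L = A ^ 2 / L := by field_simp; ring
    linarith [h0, this.symm.le, this.le]
  calc A ^ 2 = (A ^ 2 / L) * L := by field_simp
    _ ≤ B * L := by nlinarith
    _ = L * B := mul_comm _ _

private lemma integral_pos_left (a b : ℝ) (hab : a < b) (f : ℝ → ℝ)
    (hf : ContinuousOn f (Icc a b)) (hnn : ∀ x ∈ Icc a b, 0 ≤ f x)
    (hfa : 0 < f a) : 0 < ∫ x in a..b, f x := by
  have hca : ContinuousWithinAt f (Icc a b) a := hf a ⟨le_rfl, hab.le⟩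
  have hev : ∀ᶠ x in nhdsWithin a (Icc a b), 0 < f x :=
    hca.eventually (eventually_gt_nhds hfa)
  rw [eventually_nhdsWithin_iff] at hev
  rw [Metric.eventually_nhds_iff] at hev
  obtain ⟨ε, hε, hball⟩ := hev
  set b' := min b (a + ε / 2) with hb'
  have hab' : a < b' := lt_min hab (by linarith)
  have hb'b : b' ≤ b := min_le_left _ _
  have hpos : ∀ x ∈ Ioo a b', 0 < f x := by
    intro x hx
    have hxb : x ≤ b := le_trans hx.2.le hb'b
    have hd : dist x a < ε := by
      rw [Real.dist_eq, abs_of_pos (by linarith [hx.1])]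
      have : x < a + ε / 2 := lt_of_lt_of_le hx.2 (min_le_right _ _)
      linarith
    exact hball hd ⟨hx.1.le, hxb⟩
  have hfi1 : IntervalIntegrable f volume a b' :=
    ((uIcc_of_le hab'.le) ▸ (hf.mono (Icc_subset_Icc le_rfl hb'b))).intervalIntegrable
  have hfi2 : IntervalIntegrable f volume b' b :=
    ((uIcc_of_le hb'b) ▸ (hf.mono (Icc_subset_Icc (by linarith [hab'.le]) le_rfl))).intervalIntegrable
  have h1 : 0 < ∫ x in a..b', f x := intervalIntegral_pos_of_pos_on hfi1 hpos hab'
  have h2 : 0 ≤ ∫ x in b'..b, f x :=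
    intervalIntegral.integral_nonneg hb'b (fun x hx => hnn x ⟨le_trans hab'.le hx.1, hx.2⟩)
  have := integral_add_adjacent_intervals hfi1 hfi2
  linarith [this]

private lemma norm_add_sq_le₂ (x y : ℂ) : ‖x + y‖ ^ 2 ≤ 2 * ‖x‖ ^ 2 + 2 * ‖y‖ ^ 2 := by
  have h1 := norm_add_le x y
  nlinarith [norm_nonneg x, norm_nonneg y, norm_nonneg (x + y), sq_nonneg (‖x‖ - ‖y‖)]

set_option maxHeartbeats 4000000 in
/-- `θ`-uniform Poincaré-type inequality: every `θ`-quasiperiodic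
continuously differentiable function `u` on `[0,1]` can be approximated in the weighted
energy norm by a `θ`-quasiperiodic function `v` that is constant on the stiff interval
`[h,1]`, with error controlled by the stiff part of the energy of `u`, uniformly in `θ`. -/
theorem uniform_poincare_inequality
    (h : ℝ) (hh0 : 0 < h) (hh1 : h < 1)
    (a₀ ρ₀ a₁ ρ₁ ρ : ℝ → ℝ)
    (ha₀c : ContinuousOn a₀ (Icc 0 h)) (ha₀p : ∀ y ∈ Icc (0:ℝ) h, 0 < a₀ y)
    (hρ₀c : ContinuousOn ρ₀ (Icc 0 h)) (hρ₀p : ∀ y ∈ Icc (0:ℝ) h, 0 < ρ₀ y)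
    (ha₁c : ContinuousOn a₁ (Icc h 1)) (ha₁p : ∀ y ∈ Icc h (1:ℝ), 0 < a₁ y)
    (hρ₁c : ContinuousOn ρ₁ (Icc h 1)) (hρ₁p : ∀ y ∈ Icc h (1:ℝ), 0 < ρ₁ y)
    (hρ₀eq : ∀ y ∈ Icc (0:ℝ) h, ρ y = ρ₀ y)
    (hρ₁eq : ∀ y ∈ Ioc h (1:ℝ), ρ y = ρ₁ y) :
    ∃ C > 0, ∀ θ : ℝ, ∀ u u' : ℝ → ℂ,
      ContinuousOn u' (Icc 0 1) →
      (∀ y ∈ Icc (0:ℝ) 1, HasDerivAt u (u' y) y) →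
      u 1 = Complex.exp (θ * Complex.I) * u 0 →
      ∃ v v' : ℝ → ℂ,
        ContinuousOn v (Icc 0 1) ∧
        ContinuousOn v' (Icc 0 h) ∧
        (∀ y ∈ Icc (0:ℝ) h, HasDerivAt v (v' y) y) ∧
        (∀ y ∈ Icc h (1:ℝ), v y = v h) ∧
        v h = Complex.exp (θ * Complex.I) * v 0 ∧
        (∫ y in (0:ℝ)..h, a₀ y * ‖u' y - v' y‖ ^ 2)
            + (∫ y in h..(1:ℝ), a₁ y * ‖u' y‖ ^ 2)
            + (∫ y in (0:ℝ)..1, ρ y * ‖u y - v y‖ ^ 2)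
          ≤ C ^ 2 * ∫ y in h..(1:ℝ), a₁ y * ‖u' y‖ ^ 2 := by
  have hne0 : (Icc (0:ℝ) h).Nonempty := ⟨0, le_rfl, hh0.le⟩
  have hne1 : (Icc h (1:ℝ)).Nonempty := ⟨h, le_rfl, hh1.le⟩
  obtain ⟨x₀, hx₀, hM₀⟩ := isCompact_Icc.exists_isMaxOn hne0 ha₀c
  obtain ⟨x₁, hx₁, hMρ₀⟩ := isCompact_Icc.exists_isMaxOn hne0 hρ₀c
  obtain ⟨x₂, hx₂, hMρ₁⟩ := isCompact_Icc.exists_isMaxOn hne1 hρ₁c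
  obtain ⟨x₃, hx₃, hm₁⟩ := isCompact_Icc.exists_isMinOn hne1 ha₁c
  set M₀ := a₀ x₀ with hM₀def
  set Mρ₀ := ρ₀ x₁ with hMρ₀def
  set Mρ₁ := ρ₁ x₂ with hMρ₁def
  set m₁ := a₁ x₃ with hm₁def
  have hM₀pos : 0 < M₀ := ha₀p _ hx₀
  have hMρ₀pos : 0 < Mρ₀ := hρ₀p _ hx₁
  have hMρ₁pos : 0 < Mρ₁ := hρ₁p _ hx₂
  have hm₁pos : 0 < m₁ := ha₁p _ hx₃
  set K := (1 - h) / m₁ with hKdef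
  have hKpos : 0 < K := div_pos (by linarith) hm₁pos
  set Kk := 2 * K + h with hKkdef
  have hKkpos : 0 < Kk := by positivity
  set Ctot := 1 + 2 * M₀ * Kk * (36 / h) + 2 * M₀ + Mρ₀ * (2 * Kk + 2 * h) * h
      + (1 - h) * Mρ₁ * K with hCtotdef
  have hM₀le : ∀ y ∈ Icc (0:ℝ) h, a₀ y ≤ M₀ := fun y hy => hM₀ hy
  have hMρ₀le : ∀ y ∈ Icc (0:ℝ) h, ρ₀ y ≤ Mρ₀ := fun y hy => hMρ₀ hy
  have hMρ₁le : ∀ y ∈ Icc h (1:ℝ), ρ₁ y ≤ Mρ₁ := fun y hy => hMρ₁ hy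
  have hm₁le : ∀ y ∈ Icc h (1:ℝ), m₁ ≤ a₁ y := fun y hy => hm₁ hy
  clear_value M₀ Mρ₀ Mρ₁ m₁ K Kk Ctot
  have hCtot1 : 1 ≤ Ctot := by
    have c1 : 0 ≤ 2 * M₀ * Kk * (36 / h) :=
      mul_nonneg (mul_nonneg (mul_nonneg (by norm_num) hM₀pos.le) hKkpos.le)
        (div_nonneg (by norm_num) hh0.le)
    have c2 : 0 ≤ Mρ₀ * (2 * Kk + 2 * h) * h :=
      mul_nonneg (mul_nonneg hMρ₀pos.le (by linarith only [hKkpos, hh0])) hh0.le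
    have c3 : 0 ≤ (1 - h) * Mρ₁ * K :=
      mul_nonneg (mul_nonneg (by linarith only [hh1]) hMρ₁pos.le) hKpos.le
    have c4 : 0 ≤ 2 * M₀ := by linarith only [hM₀pos]
    simp only [hCtotdef]
    linarith only [c1, c2, c3, c4]
  have hCtotpos : 0 < Ctot := by linarith only [hCtot1]
  refine ⟨Real.sqrt Ctot, Real.sqrt_pos.mpr hCtotpos, ?_⟩
  intro θ u u' hu'c hu hper
  have hCsq : Real.sqrt Ctot ^ 2 = Ctot := Real.sq_sqrt hCtotpos.le
  have hucont : ContinuousOn u (Icc 0 1) :=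
    fun y hy => (hu y hy).continuousAt.continuousWithinAt
  have hsub01 : Icc h (1:ℝ) ⊆ Icc 0 1 := Icc_subset_Icc hh0.le le_rfl
  have hsub0h : Icc (0:ℝ) h ⊆ Icc 0 1 := Icc_subset_Icc le_rfl hh1.le
  have huIcc1 : uIcc h (1:ℝ) = Icc h 1 := uIcc_of_le hh1.le
  have huIcc0 : uIcc (0:ℝ) h = Icc 0 h := uIcc_of_le hh0.le
  set S := ∫ y in h..(1:ℝ), a₁ y * ‖u' y‖ ^ 2 with hSdef
  have hScont : ContinuousOn (fun y => a₁ y * ‖u' y‖ ^ 2) (Icc h 1) :=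
    ha₁c.mul (((hu'c.mono hsub01).norm).pow 2)
  have hSnn : 0 ≤ S :=
    intervalIntegral.integral_nonneg hh1.le
      (fun y hy => mul_nonneg (ha₁p y hy).le (by positivity))
  set D := ‖u' h‖ ^ 2 with hDdef
  have hDnn : 0 ≤ D := by positivity
  -- the small parameter δ
  have hSpos_of_D : D ≠ 0 → 0 < S := by
    intro hD
    have hDpos : 0 < D := lt_of_le_of_ne hDnn (Ne.symm hD)
    refine integral_pos_left h 1 hh1 _ hScont
      (fun y hy => mul_nonneg (ha₁p y hy).le (by positivity)) ?_
    exact mul_pos (ha₁p h ⟨le_rfl, hh1.le⟩) hDpos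
  obtain ⟨δ, hδpos, hδh, hDδ⟩ : ∃ δ : ℝ, 0 < δ ∧ δ ≤ h ∧ D * δ ≤ S := by
    by_cases hD : D = 0
    · exact ⟨h, hh0, le_rfl, by simp [hD, hSnn]⟩
    · have hDpos : 0 < D := lt_of_le_of_ne hDnn (Ne.symm hD)
      refine ⟨min h (S / D), lt_min hh0 (div_pos (hSpos_of_D hD) hDpos), min_le_left _ _, ?_⟩
      calc D * min h (S / D) ≤ D * (S / D) :=
            mul_le_mul_of_nonneg_left (min_le_right _ _) hDnn
        _ = S := by field_simp
  set c0 := h - δ with hc0def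
  have hc0nn : 0 ≤ c0 := by simp only [hc0def]; linarith only [hδh]
  have hc0h : c0 ≤ h := by simp only [hc0def]; linarith only [hδpos]
  -- the auxiliary real functions
  set φ : ℝ → ℝ := fun y => 3 * (y / h) ^ 2 - 2 * (y / h) ^ 3 with hφdef
  set φd : ℝ → ℝ := fun y => 6 * y / h ^ 2 - 6 * y ^ 2 / h ^ 3 with hφddef
  set ψ : ℝ → ℝ := fun y => (max y c0 - c0) / δ with hψdef
  set G : ℝ → ℝ := fun y => (max y c0 - c0) ^ 2 / (2 * δ) with hGdef
  have hφ0 : φ 0 = 0 := by simp [hφdef]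
  have hφh : φ h = 1 := by
    simp only [hφdef]; rw [div_self hh0.ne']; ring
  have hφdh : φd h = 0 := by
    simp only [hφddef]; field_simp; ring
  have hψh : ψ h = 1 := by
    simp only [hψdef, hc0def, max_eq_left (by linarith only [hδpos] : h - δ ≤ h)]
    field_simp
    ring
  have hG0 : G 0 = 0 := by
    simp only [hGdef, max_eq_right hc0nn]
    simp
  have hGh : G h = δ / 2 := by
    simp only [hGdef, hc0def, max_eq_left (by linarith only [hδpos] : h - δ ≤ h)]
    field_simp
    ring
  have hψ01 : ∀ y ∈ Icc (0:ℝ) h, 0 ≤ ψ y ∧ ψ y ≤ 1 := by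
    intro y hy
    constructor
    · exact div_nonneg (by simp [le_max_right]) hδpos.le
    · rw [div_le_one hδpos]
      have hm : max y c0 ≤ h := max_le hy.2 hc0h
      simp only [hc0def] at hm ⊢
      linarith only [hm]
  have hG0δ : ∀ y ∈ Icc (0:ℝ) h, 0 ≤ G y ∧ G y ≤ δ / 2 := by
    intro y hy
    have h1 : 0 ≤ max y c0 - c0 := by simp [le_max_right]
    have h2 : max y c0 - c0 ≤ δ := by
      have hm : max y c0 ≤ h := max_le hy.2 hc0h
      simp only [hc0def] at hm ⊢; linarith only [hm]
    have h3 : (max y c0 - c0) ^ 2 ≤ δ ^ 2 := pow_le_pow_left₀ h1 h2 2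
    constructor
    · positivity
    · have h4 : (max y c0 - c0) ^ 2 / (2 * δ) ≤ δ ^ 2 / (2 * δ) :=
        div_le_div_of_nonneg_right h3 (by positivity)
      have h5 : δ ^ 2 / (2 * δ) = δ / 2 := by
        field_simp
      simp only [hGdef]
      rw [← h5]; exact h4
  -- derivatives of the auxiliary functions
  have hφder : ∀ y : ℝ, HasDerivAt φ (φd y) y := by
    intro y
    have hq : HasDerivAt (fun t : ℝ => t / h) (1 / h) y := by
      simpa using (hasDerivAt_id y).div_const h
    have h2 := ((hq.pow 2).const_mul (3:ℝ)).sub ((hq.pow 3).const_mul (2:ℝ))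
    refine h2.congr_deriv ?_
    norm_num
    simp only [hφddef]
    field_simp
    ring
  have hGder : ∀ y : ℝ, HasDerivAt G (ψ y) y := by
    intro y
    rcases lt_trichotomy y c0 with hlt | heq | hgt
    · have hev : (fun t => (0:ℝ)) =ᶠ[nhds y] G := by
        filter_upwards [Iio_mem_nhds hlt] with t ht
        simp [hGdef, max_eq_right (mem_Iio.mp ht).le]
      have hψy : ψ y = 0 := by
        simp [hψdef, max_eq_right hlt.le]
      rw [hψy]
      exact (hasDerivAt_const y (0:ℝ)).congr_of_eventuallyEq hev.symm
    · rw [heq]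
      have hd : HasDerivAt (fun t : ℝ => (t - c0) ^ 2 / (2 * δ)) 0 c0 := by
        have := (((hasDerivAt_id c0).sub_const c0).pow 2).div_const (2 * δ)
        simpa using this
      have hψy : ψ c0 = 0 := by simp [hψdef]
      rw [hψy]
      have hbd : ∀ t : ℝ, |max t c0 - c0| ≤ |t - c0| := by
        intro t
        rcases le_total t c0 with hty | hty
        · rw [max_eq_right hty]
          simp [abs_nonneg]
        · rw [max_eq_left hty]
      have := clamp_deriv hd (fun t => max t c0) (continuous_id.max continuous_const)
        (max_self c0) hbd
      exact this
    · have hd : HasDerivAt (fun t : ℝ => (t - c0) ^ 2 / (2 * δ)) ((y - c0) / δ) y := by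
        have := (((hasDerivAt_id y).sub_const c0).pow 2).div_const (2 * δ)
        refine this.congr_deriv ?_
        norm_num
        field_simp
      have hev : (fun t : ℝ => (t - c0) ^ 2 / (2 * δ)) =ᶠ[nhds y] G := by
        filter_upwards [Ioi_mem_nhds hgt] with t ht
        simp [hGdef, max_eq_left (le_of_lt (mem_Ioi.mp ht))]
      have hψy : ψ y = (y - c0) / δ := by
        simp [hψdef, max_eq_left hgt.le]
      rw [hψy]
      exact hd.congr_of_eventuallyEq hev.symm
  have hψcont : Continuous ψ := by
    simp only [hψdef]
    exact ((continuous_id.max continuous_const).sub continuous_const).div_const δ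
  have hφdcont : Continuous φd := by
    simp only [hφddef]
    exact ((continuous_const.mul continuous_id).div_const _).sub
      ((continuous_const.mul (continuous_pow 2)).div_const _)
  have hGcont : Continuous G := by
    simp only [hGdef]
    exact (((continuous_id.max continuous_const).sub continuous_const).pow 2).div_const (2 * δ)
  have hφcont : Continuous φ := by
    simp only [hφdef]
    exact (continuous_const.mul ((continuous_id.div_const h).pow 2)).sub
      (continuous_const.mul ((continuous_id.div_const h).pow 3))
  -- the comparison function
  set c : ℂ := u 1 - u h with hcdef
  set k : ℂ := c + u' h * (G h : ℂ) with hkdef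
  set w : ℝ → ℂ := fun y => u y + k * (φ y : ℂ) - u' h * (G y : ℂ) with hwdef
  set w' : ℝ → ℂ := fun y => u' y + k * (φd y : ℂ) - u' h * (ψ y : ℂ) with hw'def
  set v : ℝ → ℂ := fun y => w (min y h) with hvdef
  have hwder : ∀ y ∈ Icc (0:ℝ) 1, HasDerivAt w (w' y) y := by
    intro y hy
    have h1 : HasDerivAt (fun t => ((φ t : ℝ) : ℂ)) ((φd y : ℝ) : ℂ) y :=
      (hφder y).ofReal_comp
    have h2 : HasDerivAt (fun t => ((G t : ℝ) : ℂ)) ((ψ y : ℝ) : ℂ) y :=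
      (hGder y).ofReal_comp
    exact ((hu y hy).add (h1.const_mul k)).sub (h2.const_mul (u' h))
  have hw'h : w' h = 0 := by
    simp [hw'def, hφdh, hψh]
  have hwh : w h = u 1 := by
    simp only [hwdef, hφh, hkdef, hcdef]
    push_cast
    ring
  have hw0 : w 0 = u 0 := by simp [hwdef, hφ0, hG0]
  have hvle : ∀ y : ℝ, y ≤ h → v y = w y := by
    intro y hy; simp [hvdef, min_eq_left hy]
  have hvge : ∀ y : ℝ, h ≤ y → v y = u 1 := by
    intro y hy; simp [hvdef, min_eq_right hy, hwh]
  have hvh : v h = u 1 := hvge h le_rfl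
  have hv0 : v 0 = u 0 := by rw [hvle 0 hh0.le, hw0]
  have hw'cont : ContinuousOn w' (Icc 0 h) := by
    simp only [hw'def]
    exact ((hu'c.mono hsub0h).add
        (continuous_const.mul (Complex.continuous_ofReal.comp hφdcont)).continuousOn).sub
      (continuous_const.mul (Complex.continuous_ofReal.comp hψcont)).continuousOn
  have hwcont : ContinuousOn w (Icc 0 1) := by
    simp only [hwdef]
    exact (hucont.add
        (continuous_const.mul (Complex.continuous_ofReal.comp hφcont)).continuousOn).sub
      (continuous_const.mul (Complex.continuous_ofReal.comp hGcont)).continuousOn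
  have hvcont : ContinuousOn v (Icc 0 1) := by
    simp only [hvdef]
    exact ContinuousOn.comp hwcont ((continuous_id.min continuous_const).continuousOn)
      (fun y hy => ⟨le_min hy.1 hh0.le, min_le_of_left_le hy.2⟩)
  have hvder : ∀ y ∈ Icc (0:ℝ) h, HasDerivAt v (w' y) y := by
    intro y hy
    rcases lt_or_eq_of_le hy.2 with hlt | heq
    · have hev : w =ᶠ[nhds y] v := by
        filter_upwards [Iio_mem_nhds hlt] with t ht
        rw [hvle t (mem_Iio.mp ht).le]
      exact (hwder y (hsub0h hy)).congr_of_eventuallyEq hev.symm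
    · rw [heq, hw'h]
      have hbd : ∀ t : ℝ, |min t h - h| ≤ |t - h| := by
        intro t
        rcases le_total t h with hth | hth
        · rw [min_eq_left hth]
        · rw [min_eq_right hth]
          simp [abs_nonneg]
      have hwd0 : HasDerivAt w 0 h := hw'h ▸ hwder h ⟨hh0.le, hh1.le⟩
      exact clamp_deriv hwd0 (fun t => min t h) (continuous_id.min continuous_const)
        (min_self h) hbd
  refine ⟨v, w', hvcont, hw'cont, hvder,
    fun y hy => by rw [hvge y hy.1, hvh], by rw [hvh, hv0]; exact hper, ?_⟩
  rw [hCsq]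
  have int1 : ∀ {f : ℝ → ℝ}, ContinuousOn f (Icc h 1) → IntervalIntegrable f volume h 1 :=
    fun hf => (huIcc1 ▸ hf).intervalIntegrable
  have int0 : ∀ {f : ℝ → ℝ}, ContinuousOn f (Icc 0 h) → IntervalIntegrable f volume 0 h :=
    fun hf => (huIcc0 ▸ hf).intervalIntegrable
  have hu'i : IntervalIntegrable u' volume h 1 :=
    (huIcc1 ▸ (hu'c.mono hsub01)).intervalIntegrable
  have hftc : ∫ y in h..(1:ℝ), u' y = c := by
    rw [hcdef]
    exact integral_eq_sub_of_hasDerivAt (fun t ht => hu t (hsub01 (huIcc1 ▸ ht))) hu'i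
  set J := ∫ y in h..(1:ℝ), ‖u' y‖ with hJdef
  have hJnn : 0 ≤ J :=
    intervalIntegral.integral_nonneg hh1.le (fun y _ => norm_nonneg _)
  have hnormc : ‖c‖ ≤ J := by
    rw [← hftc]
    exact intervalIntegral.norm_integral_le_integral_norm hh1.le
  have hIu2 : ∫ y in h..(1:ℝ), ‖u' y‖ ^ 2 ≤ S / m₁ := by
    rw [le_div_iff₀ hm₁pos]
    have h1 : (∫ y in h..(1:ℝ), ‖u' y‖ ^ 2) * m₁ = ∫ y in h..(1:ℝ), m₁ * ‖u' y‖ ^ 2 := by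
      rw [intervalIntegral.integral_const_mul]
      exact mul_comm _ _
    rw [h1]
    refine intervalIntegral.integral_mono_on hh1.le
      (int1 ((continuousOn_const).mul ((hu'c.mono hsub01).norm.pow 2))) (int1 hScont) ?_
    intro y hy
    exact mul_le_mul_of_nonneg_right (hm₁le y hy) (by positivity)
  have hJ2 : J ^ 2 ≤ K * S := by
    have hcs := cs_ineq h 1 hh1 (fun y => ‖u' y‖) (hu'c.mono hsub01).norm
    calc J ^ 2 ≤ (1 - h) * ∫ y in h..(1:ℝ), ‖u' y‖ ^ 2 := hcs
      _ ≤ (1 - h) * (S / m₁) := by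
          exact mul_le_mul_of_nonneg_left hIu2 (by linarith only [hh1])
      _ = K * S := by rw [hKdef]; ring
  have hc2 : ‖c‖ ^ 2 ≤ K * S :=
    le_trans (pow_le_pow_left₀ (norm_nonneg c) hnormc 2) hJ2
  have hGh2 : ‖u' h * ((G h : ℝ) : ℂ)‖ ^ 2 = D * (G h) ^ 2 := by
    rw [norm_mul, mul_pow, Complex.norm_real, Real.norm_eq_abs, sq_abs, hDdef]
  have hDδ2 : D * δ ^ 2 ≤ S * h :=
    calc D * δ ^ 2 = (D * δ) * δ := by ring
      _ ≤ S * δ := mul_le_mul_of_nonneg_right hDδ hδpos.le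
      _ ≤ S * h := mul_le_mul_of_nonneg_left hδh hSnn
  have hk2 : ‖k‖ ^ 2 ≤ Kk * S := by
    have h1 := norm_add_sq_le₂ c (u' h * ((G h : ℝ) : ℂ))
    rw [hGh2] at h1
    have h2 : ‖k‖ ^ 2 ≤ 2 * ‖c‖ ^ 2 + 2 * (D * (G h) ^ 2) := by rw [hkdef]; exact h1
    have h3 : 2 * (D * (G h) ^ 2) = D * δ ^ 2 / 2 := by rw [hGh]; ring
    have h4 : D * δ ^ 2 / 2 ≤ S * h / 2 := by linarith only [hDδ2]
    have h5 : S * h ≤ 2 * (h * S) := by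
      have h6 := mul_nonneg hSnn hh0.le
      linarith only [h6]
    calc ‖k‖ ^ 2 ≤ 2 * ‖c‖ ^ 2 + D * δ ^ 2 / 2 := by linarith only [h2, h3]
      _ ≤ 2 * (K * S) + h * S := by linarith only [hc2, h4, h5]
      _ = Kk * S := by rw [hKkdef]; ring
  -- integrals of the auxiliary profiles
  have hφdint : IntervalIntegrable (fun y => (φd y) ^ 2) volume 0 h :=
    (hφdcont.pow 2).intervalIntegrable _ _
  have hψint : IntervalIntegrable ψ volume 0 h := hψcont.intervalIntegrable _ _
  have hψ2int : IntervalIntegrable (fun y => (ψ y) ^ 2) volume 0 h :=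
    (hψcont.pow 2).intervalIntegrable _ _
  set Iφ := ∫ y in (0:ℝ)..h, (φd y) ^ 2 with hIφdef
  set Iψ := ∫ y in (0:ℝ)..h, (ψ y) ^ 2 with hIψdef
  have hIφnn : 0 ≤ Iφ :=
    intervalIntegral.integral_nonneg hh0.le (fun y _ => sq_nonneg _)
  have hIψnn : 0 ≤ Iψ :=
    intervalIntegral.integral_nonneg hh0.le (fun y _ => sq_nonneg _)
  have hIφle : Iφ ≤ 36 / h := by
    have hb : ∀ y ∈ Icc (0:ℝ) h, (φd y) ^ 2 ≤ 36 / h ^ 2 := by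
      intro y hy
      have he : φd y = 6 * y * (h - y) / h ^ 3 := by
        simp only [hφddef]; field_simp
      have h1 : 0 ≤ φd y := by
        rw [he]
        exact div_nonneg (mul_nonneg (mul_nonneg (by norm_num) hy.1)
          (by linarith only [hy.2])) (by positivity)
      have h2 : φd y ≤ 6 / h := by
        rw [he, div_le_div_iff₀ (by positivity) hh0]
        have h3 : y * (h - y) ≤ h * h :=
          mul_le_mul hy.2 (by linarith only [hy.1]) (by linarith only [hy.2]) hh0.le
        have h4 := mul_le_mul_of_nonneg_left h3 (by positivity : (0:ℝ) ≤ 6 * h)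
        linarith only [h4]
      calc (φd y) ^ 2 ≤ (6 / h) ^ 2 := pow_le_pow_left₀ h1 h2 2
        _ = 36 / h ^ 2 := by rw [div_pow]; norm_num
    calc Iφ ≤ ∫ _y in (0:ℝ)..h, 36 / h ^ 2 :=
        intervalIntegral.integral_mono_on hh0.le hφdint intervalIntegrable_const hb
      _ = h * (36 / h ^ 2) := by
          rw [intervalIntegral.integral_const, smul_eq_mul, sub_zero]
      _ = 36 / h := by field_simp
  have hIψeq : ∫ y in (0:ℝ)..h, ψ y = δ / 2 := by
    have := integral_eq_sub_of_hasDerivAt (fun t _ => hGder t)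
      (hψcont.intervalIntegrable 0 h)
    rw [this, hGh, hG0, sub_zero]
  have hIψle : Iψ ≤ δ := by
    have hb : ∀ y ∈ Icc (0:ℝ) h, (ψ y) ^ 2 ≤ ψ y := by
      intro y hy
      obtain ⟨h1, h2⟩ := hψ01 y hy
      calc (ψ y) ^ 2 = ψ y * ψ y := sq (ψ y)
        _ ≤ ψ y * 1 := mul_le_mul_of_nonneg_left h2 h1
        _ = ψ y := mul_one _
    calc Iψ ≤ ∫ y in (0:ℝ)..h, ψ y :=
        intervalIntegral.integral_mono_on hh0.le hψ2int hψint hb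
      _ = δ / 2 := hIψeq
      _ ≤ δ := by linarith only [hδpos]
  -- the soft part of the energy
  have hT1 : (∫ y in (0:ℝ)..h, a₀ y * ‖u' y - w' y‖ ^ 2)
      ≤ 2 * M₀ * Kk * (36 / h) * S + 2 * M₀ * S := by
    have hlhs_int : IntervalIntegrable (fun y => a₀ y * ‖u' y - w' y‖ ^ 2) volume 0 h :=
      int0 (ha₀c.mul (((hu'c.mono hsub0h).sub hw'cont).norm.pow 2))
    have hrhs_cont : Continuous
        (fun y => M₀ * (2 * ‖k‖ ^ 2 * (φd y) ^ 2 + 2 * D * (ψ y) ^ 2)) :=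
      continuous_const.mul ((continuous_const.mul (hφdcont.pow 2)).add
        (continuous_const.mul (hψcont.pow 2)))
    have hpt : ∀ y ∈ Icc (0:ℝ) h, a₀ y * ‖u' y - w' y‖ ^ 2
        ≤ M₀ * (2 * ‖k‖ ^ 2 * (φd y) ^ 2 + 2 * D * (ψ y) ^ 2) := by
      intro y hy
      have he : u' y - w' y = -(k * ((φd y : ℝ) : ℂ) - u' h * ((ψ y : ℝ) : ℂ)) := by
        rw [hw'def]; ring
      rw [he, norm_neg]
      have hb := norm_sub_sq_le₂ (k * ((φd y : ℝ) : ℂ)) (u' h * ((ψ y : ℝ) : ℂ))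
      rw [norm_mul, norm_mul, Complex.norm_real, Complex.norm_real,
        Real.norm_eq_abs, Real.norm_eq_abs, mul_pow, mul_pow, sq_abs, sq_abs] at hb
      have hb2 : ‖k * ((φd y : ℝ) : ℂ) - u' h * ((ψ y : ℝ) : ℂ)‖ ^ 2
          ≤ 2 * ‖k‖ ^ 2 * (φd y) ^ 2 + 2 * D * (ψ y) ^ 2 := by
        rw [hDdef]; linarith only [hb]
      have hnn : 0 ≤ ‖k * ((φd y : ℝ) : ℂ) - u' h * ((ψ y : ℝ) : ℂ)‖ ^ 2 := by positivity
      exact mul_le_mul (hM₀le y hy) hb2 hnn hM₀pos.le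
    have t1 : ‖k‖ ^ 2 * Iφ ≤ (Kk * S) * (36 / h) :=
      mul_le_mul hk2 hIφle hIφnn (mul_nonneg hKkpos.le hSnn)
    have t2 : D * Iψ ≤ S := le_trans (mul_le_mul_of_nonneg_left hIψle hDnn) hDδ
    calc (∫ y in (0:ℝ)..h, a₀ y * ‖u' y - w' y‖ ^ 2)
        ≤ ∫ y in (0:ℝ)..h, M₀ * (2 * ‖k‖ ^ 2 * (φd y) ^ 2 + 2 * D * (ψ y) ^ 2) :=
          intervalIntegral.integral_mono_on hh0.le hlhs_int
            (hrhs_cont.intervalIntegrable _ _) hpt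
      _ = M₀ * (2 * ‖k‖ ^ 2 * Iφ + 2 * D * Iψ) := by
          rw [intervalIntegral.integral_const_mul,
            intervalIntegral.integral_add (hφdint.const_mul _) (hψ2int.const_mul _),
            intervalIntegral.integral_const_mul, intervalIntegral.integral_const_mul]
      _ ≤ M₀ * (2 * ((Kk * S) * (36 / h)) + 2 * S) := by
          apply mul_le_mul_of_nonneg_left _ hM₀pos.le
          linarith only [t1, t2]
      _ = 2 * M₀ * Kk * (36 / h) * S + 2 * M₀ * S := by ring
  -- bounds for φ on [0,h]
  have hφ01 : ∀ y ∈ Icc (0:ℝ) h, 0 ≤ φ y ∧ φ y ≤ 1 := by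
    intro y hy
    set t := y / h with htdef
    have ht0 : 0 ≤ t := div_nonneg hy.1 hh0.le
    have ht1 : t ≤ 1 := (div_le_one hh0).mpr hy.2
    have he : φ y = 3 * t ^ 2 - 2 * t ^ 3 := by simp only [hφdef, htdef]
    constructor
    · rw [he]
      have h1 : 3 * t ^ 2 - 2 * t ^ 3 = t ^ 2 * (3 - 2 * t) := by ring
      rw [h1]
      exact mul_nonneg (sq_nonneg t) (by linarith only [ht1])
    · rw [he]
      have h2 := mul_nonneg (sq_nonneg (1 - t)) (show (0:ℝ) ≤ 1 + 2 * t by linarith only [ht0])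
      linarith only [h2]
  -- distance bound on the stiff interval
  have hnormint : ∀ y ∈ Icc h (1:ℝ), IntervalIntegrable (fun t => ‖u' t‖) volume h y := by
    intro y hy
    exact ((uIcc_of_le hy.1) ▸
      ((hu'c.mono (Icc_subset_Icc hh0.le hy.2)).norm)).intervalIntegrable
  have hJy : ∀ y ∈ Icc h (1:ℝ), ‖u y - u 1‖ ≤ J := by
    intro y hy
    have hy1 : Icc y 1 ⊆ Icc 0 1 := Icc_subset_Icc (le_trans hh0.le hy.1) le_rfl
    have hui : IntervalIntegrable u' volume y 1 :=
      ((uIcc_of_le hy.2) ▸ (hu'c.mono hy1)).intervalIntegrable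
    have hftc2 : ∫ t in y..(1:ℝ), u' t = u 1 - u y :=
      integral_eq_sub_of_hasDerivAt (fun t ht => hu t (hy1 ((uIcc_of_le hy.2) ▸ ht))) hui
    have h1 : ‖u y - u 1‖ = ‖∫ t in y..(1:ℝ), u' t‖ := by
      rw [hftc2, norm_sub_rev]
    rw [h1]
    have hni : IntervalIntegrable (fun t => ‖u' t‖) volume y 1 :=
      ((uIcc_of_le hy.2) ▸ ((hu'c.mono hy1).norm)).intervalIntegrable
    calc ‖∫ t in y..(1:ℝ), u' t‖ ≤ ∫ t in y..(1:ℝ), ‖u' t‖ :=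
        intervalIntegral.norm_integral_le_integral_norm hy.2
      _ ≤ J := by
        have hsplit : (∫ t in h..y, ‖u' t‖) + (∫ t in y..(1:ℝ), ‖u' t‖) = J :=
          intervalIntegral.integral_add_adjacent_intervals (hnormint y hy) hni
        have hnn : 0 ≤ ∫ t in h..y, ‖u' t‖ :=
          intervalIntegral.integral_nonneg hy.1 (fun _ _ => norm_nonneg _)
        linarith only [hsplit, hnn]
  -- splitting the ρ-integral
  have hρint0 : IntervalIntegrable (fun y => ρ y * ‖u y - v y‖ ^ 2) volume 0 h := by
    rw [intervalIntegrable_iff_integrableOn_Ioc_of_le hh0.le]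
    have hint : IntegrableOn (fun y => ρ₀ y * ‖u y - v y‖ ^ 2) (Ioc 0 h) volume := by
      rw [← intervalIntegrable_iff_integrableOn_Ioc_of_le hh0.le]
      exact int0 (hρ₀c.mul ((((hucont.mono hsub0h).sub (hvcont.mono hsub0h)).norm).pow 2))
    exact hint.congr_fun (fun y hy => by rw [hρ₀eq y (Ioc_subset_Icc_self hy)])
      measurableSet_Ioc
  have hρint1 : IntervalIntegrable (fun y => ρ y * ‖u y - v y‖ ^ 2) volume h 1 := by
    rw [intervalIntegrable_iff_integrableOn_Ioc_of_le hh1.le]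
    have hint : IntegrableOn (fun y => ρ₁ y * ‖u y - v y‖ ^ 2) (Ioc h 1) volume := by
      rw [← intervalIntegrable_iff_integrableOn_Ioc_of_le hh1.le]
      exact int1 (hρ₁c.mul ((((hucont.mono hsub01).sub (hvcont.mono hsub01)).norm).pow 2))
    exact hint.congr_fun (fun y hy => by rw [hρ₁eq y hy]) measurableSet_Ioc
  have hsplitρ : (∫ y in (0:ℝ)..1, ρ y * ‖u y - v y‖ ^ 2)
      = (∫ y in (0:ℝ)..h, ρ y * ‖u y - v y‖ ^ 2)
        + ∫ y in h..(1:ℝ), ρ y * ‖u y - v y‖ ^ 2 :=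
    (intervalIntegral.integral_add_adjacent_intervals hρint0 hρint1).symm
  -- soft part of the ρ-integral
  have hT3a : (∫ y in (0:ℝ)..h, ρ y * ‖u y - v y‖ ^ 2)
      ≤ Mρ₀ * (2 * Kk + 2 * h) * h * S := by
    have hcongr : (∫ y in (0:ℝ)..h, ρ y * ‖u y - v y‖ ^ 2)
        = ∫ y in (0:ℝ)..h, ρ₀ y * ‖u y - v y‖ ^ 2 := by
      apply intervalIntegral.integral_congr
      intro y hy
      rw [huIcc0] at hy
      show ρ y * ‖u y - v y‖ ^ 2 = ρ₀ y * ‖u y - v y‖ ^ 2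
      rw [hρ₀eq y hy]
    rw [hcongr]
    have hpt : ∀ y ∈ Icc (0:ℝ) h, ρ₀ y * ‖u y - v y‖ ^ 2
        ≤ Mρ₀ * (2 * (Kk * S) + 2 * (S * h)) := by
      intro y hy
      have hvy : u y - v y = -(k * ((φ y : ℝ) : ℂ) - u' h * ((G y : ℝ) : ℂ)) := by
        rw [hvle y hy.2]
        simp only [hwdef]
        ring
      have hb := norm_sub_sq_le₂ (k * ((φ y : ℝ) : ℂ)) (u' h * ((G y : ℝ) : ℂ))
      rw [norm_mul, norm_mul, Complex.norm_real, Complex.norm_real,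
        Real.norm_eq_abs, Real.norm_eq_abs, mul_pow, mul_pow, sq_abs, sq_abs] at hb
      obtain ⟨hφ0y, hφ1y⟩ := hφ01 y hy
      obtain ⟨hG0y, hGδy⟩ := hG0δ y hy
      have e1 : ‖k‖ ^ 2 * (φ y) ^ 2 ≤ Kk * S := by
        calc ‖k‖ ^ 2 * (φ y) ^ 2 ≤ (Kk * S) * 1 ^ 2 := by
              apply mul_le_mul hk2 (pow_le_pow_left₀ hφ0y hφ1y 2) (sq_nonneg _)
                (mul_nonneg hKkpos.le hSnn)
          _ = Kk * S := by ring
      have e2 : ‖u' h‖ ^ 2 * (G y) ^ 2 ≤ S * h := by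
        have h1 : (G y) ^ 2 ≤ δ ^ 2 :=
          pow_le_pow_left₀ hG0y (le_trans hGδy (by linarith only [hδpos])) 2
        calc ‖u' h‖ ^ 2 * (G y) ^ 2 ≤ D * δ ^ 2 := by
              rw [hDdef]
              exact mul_le_mul_of_nonneg_left h1 (by positivity)
          _ ≤ S * h := hDδ2
      have hb2 : ‖u y - v y‖ ^ 2 ≤ 2 * (Kk * S) + 2 * (S * h) := by
        rw [hvy, norm_neg]
        linarith only [hb, e1, e2]
      exact mul_le_mul (hMρ₀le y hy) hb2 (by positivity) hMρ₀pos.le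
    calc (∫ y in (0:ℝ)..h, ρ₀ y * ‖u y - v y‖ ^ 2)
        ≤ ∫ _y in (0:ℝ)..h, Mρ₀ * (2 * (Kk * S) + 2 * (S * h)) :=
          intervalIntegral.integral_mono_on hh0.le
            (int0 (hρ₀c.mul ((((hucont.mono hsub0h).sub (hvcont.mono hsub0h)).norm).pow 2)))
            intervalIntegrable_const hpt
      _ = h * (Mρ₀ * (2 * (Kk * S) + 2 * (S * h))) := by
          rw [intervalIntegral.integral_const, smul_eq_mul, sub_zero]
      _ = Mρ₀ * (2 * Kk + 2 * h) * h * S := by ring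
  -- stiff part of the ρ-integral
  have hT3b : (∫ y in h..(1:ℝ), ρ y * ‖u y - v y‖ ^ 2) ≤ (1 - h) * Mρ₁ * K * S := by
    have hcongr : (∫ y in h..(1:ℝ), ρ y * ‖u y - v y‖ ^ 2)
        = ∫ y in h..(1:ℝ), ρ₁ y * ‖u y - u 1‖ ^ 2 := by
      apply intervalIntegral.integral_congr_ae
      refine Filter.Eventually.of_forall (fun y hy => ?_)
      rw [uIoc_of_le hh1.le] at hy
      show ρ y * ‖u y - v y‖ ^ 2 = ρ₁ y * ‖u y - u 1‖ ^ 2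
      rw [hρ₁eq y hy, hvge y hy.1.le]
    rw [hcongr]
    have hpt : ∀ y ∈ Icc h (1:ℝ), ρ₁ y * ‖u y - u 1‖ ^ 2 ≤ Mρ₁ * J ^ 2 := fun y hy =>
      mul_le_mul (hMρ₁le y hy) (pow_le_pow_left₀ (norm_nonneg _) (hJy y hy) 2)
        (by positivity) hMρ₁pos.le
    calc (∫ y in h..(1:ℝ), ρ₁ y * ‖u y - u 1‖ ^ 2)
        ≤ ∫ _y in h..(1:ℝ), Mρ₁ * J ^ 2 :=
          intervalIntegral.integral_mono_on hh1.le
            (int1 (hρ₁c.mul ((((hucont.mono hsub01).sub continuousOn_const).norm).pow 2)))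
            intervalIntegrable_const hpt
      _ = (1 - h) * (Mρ₁ * J ^ 2) := by
          rw [intervalIntegral.integral_const, smul_eq_mul]
      _ ≤ (1 - h) * (Mρ₁ * (K * S)) := by
          apply mul_le_mul_of_nonneg_left _ (by linarith only [hh1] : (0:ℝ) ≤ 1 - h)
          exact mul_le_mul_of_nonneg_left hJ2 hMρ₁pos.le
      _ = (1 - h) * Mρ₁ * K * S := by ring
  -- conclusion
  rw [hsplitρ, hCtotdef]
  calc (∫ y in (0:ℝ)..h, a₀ y * ‖u' y - w' y‖ ^ 2) + S
        + ((∫ y in (0:ℝ)..h, ρ y * ‖u y - v y‖ ^ 2)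
          + ∫ y in h..(1:ℝ), ρ y * ‖u y - v y‖ ^ 2)
      ≤ (2 * M₀ * Kk * (36 / h) * S + 2 * M₀ * S) + S
        + (Mρ₀ * (2 * Kk + 2 * h) * h * S + (1 - h) * Mρ₁ * K * S) :=
        add_le_add (add_le_add hT1 le_rfl) (add_le_add hT3a hT3b)
    _ = (1 + 2 * M₀ * Kk * (36 / h) + 2 * M₀ + Mρ₀ * (2 * Kk + 2 * h) * h
          + (1 - h) * Mρ₁ * K) * S := by ring
end
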